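/- arXiv:2209.11542 — 7 statements merged into one kernel-verified Lean document; each statement's English description precedes it below -/
import Mathlib

section
/- Let N ≥ 3, p = q > 1, and let (w₁, w₂) be a C¹ solution on an interval I ⊂ (0,∞) of the system w₁' = r^{(N-1)(1-q)}|w₂|^q, w₂' = r^{(N-1)(1-q)}|w₁|^q. Then the quantity |w₁|^q w₁ - |w₂|^q w₂ is constant on I. -/
open Set

lemma key_deriv (q : ℝ) (hq : 1 < q) (x : ℝ) :
    HasDerivAt (fun x : ℝ => |x| ^ q * x) ((q + 1) * |x| ^ q) x := by
  rcases eq_or_ne x 0 with rfl | hx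
  · -- derivative at 0 is 0
    have h0 : (q + 1) * |(0:ℝ)| ^ q = 0 := by
      simp [Real.zero_rpow (by linarith : q ≠ 0)]
    rw [h0, hasDerivAt_iff_tendsto_slope]
    have : ∀ h : ℝ, h ≠ 0 → slope (fun x : ℝ => |x| ^ q * x) 0 h = |h| ^ q := by
      intro h hh
      simp only [slope, vsub_eq_sub, smul_eq_mul, sub_zero, mul_zero, abs_zero]
      rw [mul_comm (|h| ^ q) h, ← mul_assoc, inv_mul_cancel₀ hh, one_mul]
    have hcont : Filter.Tendsto (fun h : ℝ => |h| ^ q) (nhdsWithin 0 {0}ᶜ) (nhds 0) := by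
      have : ContinuousAt (fun h : ℝ => |h| ^ q) 0 :=
        (continuous_abs.rpow_const (fun _ => Or.inr (by linarith))).continuousAt
      have h0' : |(0:ℝ)| ^ q = 0 := by simp [Real.zero_rpow (by linarith : q ≠ 0)]
      have := this.tendsto
      rw [h0'] at this
      exact this.mono_left nhdsWithin_le_nhds
    refine hcont.congr' ?_
    filter_upwards [self_mem_nhdsWithin] with h hh
    exact (this h hh).symm
  · have habs : HasDerivAt (|·|) (SignType.sign x : ℝ) x := hasDerivAt_abs hx
    have hax : |x| ≠ 0 := abs_ne_zero.mpr hx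
    have hpow : HasDerivAt (fun y : ℝ => y ^ q) (q * |x| ^ (q - 1)) |x| :=
      Real.hasDerivAt_rpow_const (Or.inl hax)
    have hcomp : HasDerivAt (fun y : ℝ => |y| ^ q) (q * |x| ^ (q - 1) * (SignType.sign x : ℝ)) x :=
      hpow.comp x habs
    have := hcomp.mul (hasDerivAt_id x)
    refine this.congr_deriv ?_
    have hsx : (SignType.sign x : ℝ) * x = |x| := by
      rcases hx.lt_or_gt with h | h
      · simp [h, abs_of_neg h]
      · simp [h, abs_of_pos h]
    have hq1 : |x| ^ (q - 1) * |x| = |x| ^ q := by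
      nth_rewrite 2 [← Real.rpow_one |x|]
      rw [← Real.rpow_add (abs_pos.mpr hx)]; ring_nf
    have key : q * |x| ^ (q - 1) * (SignType.sign x : ℝ) * x = q * |x| ^ q := by
      rw [mul_assoc (q * _), hsx, mul_assoc, hq1]
    simp only [id]
    rw [key]; ring

/-- First integral for the first-order radial system with `p = q`:
`|w₁|^q w₁ - |w₂|^q w₂` is constant. -/
theorem stmt6 (N q a b : ℝ) (hN : 3 ≤ N) (hq : 1 < q) (hab : 0 ≤ a)
    (w1 w2 : ℝ → ℝ)
    (h1 : ContDiffOn ℝ 1 w1 (Set.Ioo a b)) (h2 : ContDiffOn ℝ 1 w2 (Set.Ioo a b))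
    (hw1 : ∀ r ∈ Set.Ioo a b, deriv w1 r = r ^ ((N - 1) * (1 - q)) * |w2 r| ^ q)
    (hw2 : ∀ r ∈ Set.Ioo a b, deriv w2 r = r ^ ((N - 1) * (1 - q)) * |w1 r| ^ q) :
    ∀ r₁ ∈ Set.Ioo a b, ∀ r₂ ∈ Set.Ioo a b,
      |w1 r₁| ^ q * w1 r₁ - |w2 r₁| ^ q * w2 r₁ =
      |w1 r₂| ^ q * w1 r₂ - |w2 r₂| ^ q * w2 r₂ := by
  set F : ℝ → ℝ := fun r => |w1 r| ^ q * w1 r - |w2 r| ^ q * w2 r with hF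
  have hopen : IsOpen (Set.Ioo a b) := isOpen_Ioo
  have hd : ∀ r ∈ Set.Ioo a b, HasDerivAt F 0 r := by
    intro r hr
    have hw1d : HasDerivAt w1 (deriv w1 r) r :=
      ((h1.differentiableOn one_ne_zero).differentiableAt (hopen.mem_nhds hr)).hasDerivAt
    have hw2d : HasDerivAt w2 (deriv w2 r) r :=
      ((h2.differentiableOn one_ne_zero).differentiableAt (hopen.mem_nhds hr)).hasDerivAt
    have hA : HasDerivAt (fun r => |w1 r| ^ q * w1 r)
        ((q + 1) * |w1 r| ^ q * deriv w1 r) r := (key_deriv q hq (w1 r)).comp r hw1d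
    have hB : HasDerivAt (fun r => |w2 r| ^ q * w2 r)
        ((q + 1) * |w2 r| ^ q * deriv w2 r) r := (key_deriv q hq (w2 r)).comp r hw2d
    have := hA.sub hB
    refine this.congr_deriv ?_
    rw [hw1 r hr, hw2 r hr]; ring
  intro r₁ hr₁ r₂ hr₂
  have hdiff : DifferentiableOn ℝ F (Set.Ioo a b) := fun r hr =>
    ((hd r hr).differentiableAt.differentiableWithinAt)
  refine (convex_Ioo a b).is_const_of_fderivWithin_eq_zero hdiff (fun x hx => ?_) hr₁ hr₂
  rw [fderivWithin_of_isOpen hopen hx, (hd x hx).hasFDerivAt.fderiv]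
  exact ContinuousLinearMap.ext fun y => by simp
end

section
/- Let N ≥ 3, p = q > 1 with q ≠ N/(N-1). There exists no C¹ solution (w₁,w₂) on all of (0,∞) of the system w₁' = r^{(N-1)(1-q)}|w₂|^q, w₂' = r^{(N-1)(1-q)}|w₁|^q with |w₁|^q w₁ - |w₂|^q w₂ ≡ C for some C ≠ 0. Consequently every radial solution of the Hamilton–Jacobi system with p = q on ℝ^N \ {0} satisfies u₁' ≡ u₂'. -/
open Set
namespace Stmt8Aux




lemma key {a b : ℝ} (hab : a ≤ b) (f F : ℝ → ℝ)
    (hf : ∀ r ∈ Set.Icc a b, HasDerivAt f (F r) r)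
    (hF : ∀ r ∈ Set.Icc a b, 0 ≤ F r) : f a ≤ f b := by
  have hmono : MonotoneOn f (Set.Icc a b) := by
    apply monotoneOn_of_deriv_nonneg (convex_Icc a b)
    · exact fun r hr => (hf r hr).continuousAt.continuousWithinAt
    · intro r hr
      rw [interior_Icc] at hr
      exact ((hf r (Ioo_subset_Icc_self hr)).differentiableAt).differentiableWithinAt
    · intro r hr
      rw [interior_Icc] at hr
      rw [(hf r (Ioo_subset_Icc_self hr)).deriv]
      exact hF r (Ioo_subset_Icc_self hr)
  exact hmono (left_mem_Icc.2 hab) (right_mem_Icc.2 hab) hab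

variable {q : ℝ} (hq : 1 < q)

/-- the odd power function -/
noncomputable def J (q t : ℝ) : ℝ := |t| ^ q * t

include hq in
lemma J_of_nonneg {t : ℝ} (ht : 0 ≤ t) : J q t = t ^ (q + 1) := by
  rcases eq_or_lt_of_le ht with h | h
  · rw [J, ← h, Real.zero_rpow (by linarith : q + 1 ≠ 0), abs_zero,
      Real.zero_rpow (by linarith : q ≠ 0), zero_mul]
  · rw [J, abs_of_pos h, Real.rpow_add_one h.ne']

lemma J_neg (t : ℝ) : J q (-t) = - J q t := by simp [J, mul_comm]

include hq in
lemma J_of_nonpos {t : ℝ} (ht : t ≤ 0) : J q t = -((-t) ^ (q + 1)) := by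
  have := J_neg (q := q) (-t)
  rw [neg_neg] at this
  rw [this, J_of_nonneg hq (by linarith)]

include hq in
lemma J_mono : StrictMono (J q) := by
  have hq1 : (0:ℝ) < q + 1 := by linarith
  intro s t hst
  rcases le_or_gt 0 s with hs | hs
  · rw [J_of_nonneg hq hs, J_of_nonneg hq (hs.trans hst.le)]
    exact Real.rpow_lt_rpow hs hst hq1
  · rcases le_or_gt t 0 with ht | ht
    · rw [J_of_nonpos hq hs.le, J_of_nonpos hq ht]
      have : (-t) ^ (q+1) < (-s) ^ (q+1) :=
        Real.rpow_lt_rpow (by linarith) (by linarith) hq1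
      linarith
    · rw [J_of_nonpos hq hs.le, J_of_nonneg hq ht.le]
      have h1 : 0 < (-s) ^ (q+1) := Real.rpow_pos_of_pos (by linarith) _
      have h2 : 0 ≤ t ^ (q+1) := Real.rpow_nonneg ht.le _
      linarith

include hq in
lemma J_root {A : ℝ} (hA : 0 < A) : J q (A ^ (1/(q+1))) = A := by
  have hq1 : q + 1 ≠ 0 := by positivity
  rw [J_of_nonneg hq (Real.rpow_nonneg hA.le _), ← Real.rpow_mul hA.le,
    one_div, inv_mul_cancel₀ hq1, Real.rpow_one]

include hq in
lemma J_root_neg {A : ℝ} (hA : 0 < A) : J q (-(A ^ (1/(q+1)))) = -A := by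
  rw [J_neg, J_root hq hA]

include hq in
lemma le_of_J_le {s t : ℝ} (h : J q s ≤ J q t) : s ≤ t :=
  (J_mono hq).le_iff_le.mp h





lemma exists_big {E : ℝ} (hE : 0 < E) (r0 c M : ℝ) (hr0 : 0 < r0) (hc : 0 < c) :
    ∃ R, r0 ≤ R ∧ M < (c/E) * (R ^ E - r0 ^ E) := by
  set K := r0 ^ E + E * (max M 0 + 1) / c with hK
  have hr0E : (0:ℝ) < r0 ^ E := Real.rpow_pos_of_pos hr0 _
  have hKpos : 0 < K := by positivity
  refine ⟨max r0 (K ^ (1/E)), le_max_left _ _, ?_⟩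
  have h1 : K ≤ (max r0 (K ^ (1/E))) ^ E := by
    calc K = (K ^ (1/E)) ^ E := by
          rw [← Real.rpow_mul hKpos.le, one_div, inv_mul_cancel₀ hE.ne', Real.rpow_one]
    _ ≤ _ := Real.rpow_le_rpow (Real.rpow_nonneg hKpos.le _) (le_max_right _ _) hE.le
  have h2 : (c/E) * (K - r0 ^ E) = max M 0 + 1 := by
    rw [hK]
    field_simp [hc.ne', hE.ne']
    ring
  have h3 : (c/E) * (K - r0 ^ E) ≤ (c/E) * ((max r0 (K ^ (1/E))) ^ E - r0 ^ E) :=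
    mul_le_mul_of_nonneg_left (by linarith) (by positivity)
  have h4 : M ≤ max M 0 := le_max_left _ _
  linarith

lemma exists_small {E : ℝ} (hE : E < 0) (r0 c M : ℝ) (hr0 : 0 < r0) (hc : 0 < c) :
    ∃ ε, 0 < ε ∧ ε ≤ r0 ∧ M < (c/E) * (r0 ^ E - ε ^ E) := by
  set K := r0 ^ E + (-E) * (max M 0 + 1) / c with hK
  have hr0E : (0:ℝ) < r0 ^ E := Real.rpow_pos_of_pos hr0 _
  have hKpos : 0 < K :=
    add_pos hr0E (div_pos (mul_pos (neg_pos.2 hE) (by positivity)) hc)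
  set ε := min r0 (K ^ (1/E)) with hε
  have hεpos : 0 < ε := lt_min hr0 (Real.rpow_pos_of_pos hKpos _)
  refine ⟨ε, hεpos, min_le_left _ _, ?_⟩
  have h1 : K ≤ ε ^ E := by
    calc K = (K ^ (1/E)) ^ E := by
          rw [← Real.rpow_mul hKpos.le, one_div, inv_mul_cancel₀ hE.ne, Real.rpow_one]
    _ ≤ _ := Real.rpow_le_rpow_of_nonpos hεpos (min_le_right _ _) hE.le
  have h2 : (c/E) * (r0 ^ E - K) = max M 0 + 1 := by
    rw [hK]
    field_simp [hc.ne', hE.ne]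
    ring
  have h3 : (c/E) * (r0 ^ E - K) ≤ (c/E) * (r0 ^ E - ε ^ E) := by
    have hcE : c / E ≤ 0 := div_nonpos_of_nonneg_of_nonpos hc.le hE.le
    exact mul_le_mul_of_nonpos_left (by linarith) hcE
  have h4 : M ≤ max M 0 := le_max_left _ _
  linarith





lemma grow {E : ℝ} (hE : E ≠ 0) {w D : ℝ → ℝ}
    (hd : ∀ r ∈ Set.Ioi (0:ℝ), HasDerivAt w (D r) r)
    {a b c : ℝ} (ha : 0 < a) (hab : a ≤ b)
    (hbound : ∀ r ∈ Set.Icc a b, c * r ^ (E-1) ≤ D r) :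
    (c/E) * (b ^ E - a ^ E) ≤ w b - w a := by
  have h := key hab (fun r => w r - (c/E) * r ^ E) (fun r => D r - c * r ^ (E-1))
    (fun r hr => by
      have hr0 : (0:ℝ) < r := lt_of_lt_of_le ha hr.1
      have h1 : HasDerivAt (fun r : ℝ => (c/E) * r ^ E) ((c/E) * (E * r ^ (E-1))) r :=
        (Real.hasDerivAt_rpow_const (Or.inl hr0.ne')).const_mul (c/E)
      have h2 := (hd r hr0).sub h1
      refine h2.congr_deriv ?_
      have hce : c / E * E = c := div_mul_cancel₀ c hE
      linear_combination (-(r ^ (E-1))) * hce)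
    (fun r hr => sub_nonneg.2 (hbound r hr))
  simp only [sub_le_sub_iff] at h
  nlinarith [h]


lemma rpow_root_cancel {A e : ℝ} (hA : 0 ≤ A) (he : e ≠ 0) : (A ^ (1/e)) ^ e = A := by
  rw [← Real.rpow_mul hA, one_div, inv_mul_cancel₀ he, Real.rpow_one]

lemma root_rpow_cancel {A e : ℝ} (hA : 0 ≤ A) (he : e ≠ 0) : (A ^ e) ^ (1/e) = A := by
  rw [← Real.rpow_mul hA, mul_one_div, div_self he, Real.rpow_one]

lemma no_sol {N q : ℝ} (hN : 3 ≤ N) (hq : 1 < q) (hqN : q ≠ N / (N-1))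
    {w1 w2 : ℝ → ℝ} {C : ℝ} (hC : 0 < C)
    (hd1 : ∀ r ∈ Set.Ioi (0:ℝ), HasDerivAt w1 (r ^ ((N-1)*(1-q)) * |w2 r| ^ q) r)
    (hd2 : ∀ r ∈ Set.Ioi (0:ℝ), HasDerivAt w2 (r ^ ((N-1)*(1-q)) * |w1 r| ^ q) r)
    (hint : ∀ r ∈ Set.Ioi (0:ℝ), J q (w1 r) - J q (w2 r) = C) : False := by
  have hq0 : (0:ℝ) < q := by linarith
  have hq1 : (0:ℝ) < q + 1 := by linarith
  have hq1' : q + 1 ≠ 0 := by positivity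
  set E : ℝ := N - (N-1)*q with hEdef
  have hE0 : E ≠ 0 := by
    intro h
    apply hqN
    have hN1 : N - 1 ≠ 0 := by intro h'; rw [sub_eq_zero] at h'; linarith
    rw [eq_div_iff hN1]
    rw [hEdef, sub_eq_zero] at h
    linarith [h]
  have hexp : (N-1)*(1-q) = E - 1 := by rw [hEdef]; ring
  have hd1' : ∀ r ∈ Set.Ioi (0:ℝ), HasDerivAt w1 (r ^ (E-1) * |w2 r| ^ q) r := by
    intro r hr; have := hd1 r hr; rwa [hexp] at this
  have hd2' : ∀ r ∈ Set.Ioi (0:ℝ), HasDerivAt w2 (r ^ (E-1) * |w1 r| ^ q) r := by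
    intro r hr; have := hd2 r hr; rwa [hexp] at this
  have hJw : ∀ r, 0 < r → J q (w1 r) = C + J q (w2 r) := fun r hr => by
    have := hint r hr; linarith
  have hJ0 : J q (0:ℝ) = 0 := by simp [J]
  set th : ℝ := -(C ^ (1/(q+1))) with hthdef
  have hCq : (0:ℝ) < C ^ (1/(q+1)) := Real.rpow_pos_of_pos hC _
  have hthneg : th < 0 := by rw [hthdef]; linarith
  have hJth : J q th = -C := J_root_neg hq hC
  have mono2 : ∀ a b, 0 < a → a ≤ b → w2 a ≤ w2 b := fun a b ha hab =>
    key hab w2 (fun r => r ^ (E-1) * |w1 r| ^ q)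
      (fun r hr => hd2' r (lt_of_lt_of_le ha hr.1))
      (fun r hr => by
        have h0 : (0:ℝ) < r := lt_of_lt_of_le ha hr.1
        positivity)
  rcases hE0.lt_or_gt with hEneg | hEpos
  · -- E < 0 : contradiction as r → 0
    by_cases h1 : ∃ r1, 0 < r1 ∧ w2 r1 < th
    · -- subcase: w2 goes below th; first drive w2 very negative, then Bernoulli
      obtain ⟨r1, hr1, hw2r1⟩ := h1
      have hc2 : 0 < -(C + J q (w2 r1)) := by
        have := (J_mono hq) hw2r1
        rw [hJth] at this; linarith
      set c3 : ℝ := (-(C + J q (w2 r1))) ^ (1/(q+1)) with hc3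
      have hc3pos : 0 < c3 := Real.rpow_pos_of_pos hc2 _
      have hc3q : 0 < c3 ^ q := Real.rpow_pos_of_pos hc3pos _
      have hJc3 : J q (-c3) = C + J q (w2 r1) := by
        rw [hc3, J_root_neg hq hc2]; ring
      have hw1le : ∀ r, 0 < r → r ≤ r1 → w1 r ≤ -c3 := fun r h0 hrr1 => by
        apply le_of_J_le hq
        rw [hJc3, hJw r h0]
        have := (J_mono hq).le_iff_le.2 (mono2 r r1 h0 hrr1)
        linarith
      have hbound1 : ∀ r, 0 < r → r ≤ r1 → c3 ^ q * r ^ (E-1) ≤ r ^ (E-1) * |w1 r| ^ q := by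
        intro r h0 hrr1
        have habs : c3 ≤ |w1 r| := by
          have h := hw1le r h0 hrr1
          calc c3 ≤ -(w1 r) := by linarith
          _ ≤ |w1 r| := neg_le_abs _
        have hpow : c3 ^ q ≤ |w1 r| ^ q := Real.rpow_le_rpow hc3pos.le habs hq0.le
        have hre : (0:ℝ) ≤ r ^ (E-1) := (Real.rpow_pos_of_pos h0 _).le
        calc c3 ^ q * r ^ (E-1) = r ^ (E-1) * c3 ^ q := mul_comm _ _
        _ ≤ r ^ (E-1) * |w1 r| ^ q := mul_le_mul_of_nonneg_left hpow hre
      set T : ℝ := (2*C) ^ (1/(q+1)) with hT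
      have hTpos : 0 < T := Real.rpow_pos_of_pos (by linarith) _
      obtain ⟨r2, hr2pos, hr2le, hr2big⟩ :=
        exists_small hEneg r1 (c3 ^ q) (w2 r1 + T) hr1 hc3q
      have hgrowA := grow hE0 hd2' hr2pos hr2le
        (fun r hr => hbound1 r (lt_of_lt_of_le hr2pos hr.1) hr.2)
      -- hgrowA : c3^q/E * (r1^E - r2^E) ≤ w2 r1 - w2 r2
      have hw2r2 : w2 r2 < -T := by linarith
      -- Bernoulli step on (0, r2]
      set k : ℝ := (2⁻¹ : ℝ) ^ (1/(q+1)) with hk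
      have hkpos : (0:ℝ) < k := Real.rpow_pos_of_pos (by norm_num) _
      have hkq : (0:ℝ) < k ^ q := Real.rpow_pos_of_pos hkpos _
      have hMpos : (0:ℝ) < (-(w2 r2)) ^ (1-q) :=
        Real.rpow_pos_of_pos (by linarith) _
      obtain ⟨e, hepos, hele, hebig⟩ :=
        exists_small hEneg r2 ((q-1) * k ^ q) ((-(w2 r2)) ^ (1-q)) hr2pos
          (mul_pos (by linarith : (0:ℝ) < q - 1) hkq)
      -- facts on [e, r2]
      have hfacts : ∀ r ∈ Set.Icc e r2, 0 < -(w2 r) ∧ (-(w2 r)) ^ q * k ^ q ≤ |w1 r| ^ q := by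
        intro r hr
        have h0 : (0:ℝ) < r := lt_of_lt_of_le hepos hr.1
        have hw2r : w2 r ≤ w2 r2 := mono2 r r2 h0 hr.2
        have hyT : T ≤ -(w2 r) := by linarith
        have hypos : (0:ℝ) < -(w2 r) := by linarith
        refine ⟨hypos, ?_⟩
        have h2C : 2*C ≤ (-(w2 r)) ^ (q+1) := by
          have := Real.rpow_le_rpow hTpos.le hyT hq1.le
          rwa [hT, rpow_root_cancel (by linarith : (0:ℝ) ≤ 2*C) hq1'] at this
        have hJneg : J q (w2 r) = -((-(w2 r)) ^ (q+1)) := J_of_nonpos hq (by linarith)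
        set A : ℝ := (-(w2 r)) ^ (q+1) * 2⁻¹ with hA
        have hApos : 0 < A := by positivity
        have hJle : J q (w1 r) ≤ -A := by
          rw [hJw r h0, hJneg, hA]; linarith
        have hroot : A ^ (1/(q+1)) = (-(w2 r)) * k := by
          rw [hA, Real.mul_rpow (by positivity) (by norm_num),
            root_rpow_cancel hypos.le hq1', hk]
        have hw1r : w1 r ≤ -((-(w2 r)) * k) := by
          apply le_of_J_le hq
          rw [← hroot, J_root_neg hq hApos]
          exact hJle
        have habs : (-(w2 r)) * k ≤ |w1 r| := by
          calc (-(w2 r)) * k ≤ -(w1 r) := by linarith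
          _ ≤ |w1 r| := neg_le_abs _
        have := Real.rpow_le_rpow (by positivity) habs hq0.le
        rwa [Real.mul_rpow hypos.le hkpos.le] at this
      have hber := key hele
        (fun r => (-(w2 r)) ^ (1-q) - ((q-1) * k ^ q / E) * r ^ E)
        (fun r => (-(r ^ (E-1) * |w1 r| ^ q)) * (1-q) * (-(w2 r)) ^ (1-q-1)
            - ((q-1) * k ^ q / E) * (E * r ^ (E-1)))
        (fun r hr => by
          have h0 : (0:ℝ) < r := lt_of_lt_of_le hepos hr.1
          have hypos := (hfacts r hr).1
          exact (((hd2' r h0).neg.rpow_const (Or.inl hypos.ne')).sub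
            ((Real.hasDerivAt_rpow_const (Or.inl h0.ne')).const_mul ((q-1) * k ^ q / E))))
        (fun r hr => by
          have h0 : (0:ℝ) < r := lt_of_lt_of_le hepos hr.1
          obtain ⟨hypos, hpow⟩ := hfacts r hr
          have hre : (0:ℝ) < r ^ (E-1) := Real.rpow_pos_of_pos h0 _
          have hyq : (0:ℝ) < (-(w2 r)) ^ (1-q-1) := Real.rpow_pos_of_pos hypos _
          have hcancel : (-(w2 r)) ^ (1-q-1) * (-(w2 r)) ^ q = (-(w2 r)) ^ (1-q-1+q) := by
            rw [← Real.rpow_add hypos]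
          have hcancel2 : (-(w2 r)) ^ (1-q-1+q) = 1 := by
            rw [show (1-q-1+q : ℝ) = 0 by ring, Real.rpow_zero]
          have hEE : ((q-1) * k ^ q / E) * (E * r ^ (E-1)) = (q-1) * k ^ q * r ^ (E-1) := by
            field_simp
          rw [hEE]
          have h1 : (-(w2 r)) ^ (1-q-1) * ((-(w2 r)) ^ q * k ^ q)
              ≤ (-(w2 r)) ^ (1-q-1) * |w1 r| ^ q :=
            mul_le_mul_of_nonneg_left hpow hyq.le
          have h2 : (-(w2 r)) ^ (1-q-1) * ((-(w2 r)) ^ q * k ^ q) = k ^ q := by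
            rw [← mul_assoc, hcancel, hcancel2, one_mul]
          have h3 : k ^ q ≤ (-(w2 r)) ^ (1-q-1) * |w1 r| ^ q := h2 ▸ h1
          have hmain : (q-1) * k ^ q * r ^ (E-1)
              ≤ (q-1) * (-(w2 r)) ^ (1-q-1) * (r ^ (E-1) * |w1 r| ^ q) := by
            calc (q-1) * k ^ q * r ^ (E-1) = ((q-1) * r ^ (E-1)) * k ^ q := by ring
            _ ≤ ((q-1) * r ^ (E-1)) * ((-(w2 r)) ^ (1-q-1) * |w1 r| ^ q) :=
              mul_le_mul_of_nonneg_left h3 (mul_nonneg (by linarith) hre.le)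
            _ = (q-1) * (-(w2 r)) ^ (1-q-1) * (r ^ (E-1) * |w1 r| ^ q) := by ring
          have hrg : (-(r ^ (E-1) * |w1 r| ^ q)) * (1-q) * (-(w2 r)) ^ (1-q-1)
              = (q-1) * (-(w2 r)) ^ (1-q-1) * (r ^ (E-1) * |w1 r| ^ q) := by ring
          linarith [hmain, hrg])
      -- hber : f e ≤ f r2; derive contradiction
      have hexpand : ((q-1) * k ^ q / E) * (r2 ^ E - e ^ E)
          = ((q-1) * k ^ q / E) * r2 ^ E - ((q-1) * k ^ q / E) * e ^ E := by ring
      have hepos' : (0:ℝ) < (-(w2 e)) ^ (1-q) := by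
        have := (hfacts e ⟨le_refl e, hele⟩).1
        positivity
      rw [hexpand] at hebig
      linarith [hber, hebig, hepos']
    · push_neg at h1
      -- h1 : ∀ r, 0 < r → th ≤ w2 r
      have hw1nn : ∀ r, 0 < r → 0 ≤ w1 r := fun r h0 => by
        have hJ2 : -C ≤ J q (w2 r) := by
          rw [← hJth]; exact (J_mono hq).le_iff_le.2 (h1 r h0)
        have : J q (0:ℝ) ≤ J q (w1 r) := by
          rw [hJ0, hJw r h0]; linarith
        exact le_of_J_le hq this
      by_cases h2 : ∃ r1, 0 < r1 ∧ w2 r1 < th/2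
      · obtain ⟨r1, hr1, hw2r1⟩ := h2
        set m : ℝ := C ^ (1/(q+1)) / 2 with hm
        have hmpos : 0 < m := by rw [hm]; linarith
        have hmq : 0 < m ^ q := Real.rpow_pos_of_pos hmpos _
        obtain ⟨e, hepos, hele, hebig⟩ := exists_small hEneg r1 (m ^ q) (w1 r1) hr1 hmq
        have hgrow := grow hE0 hd1' hepos hele (fun r hr => by
          have h0 : (0:ℝ) < r := lt_of_lt_of_le hepos hr.1
          have hw2r : w2 r ≤ w2 r1 := mono2 r r1 h0 hr.2
          have hw2neg : w2 r < 0 := by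
            have : th/2 < 0 := by linarith
            linarith
          have habs : m ≤ |w2 r| := by
            rw [abs_of_nonpos hw2neg.le, hm]
            have : w2 r < th/2 := by linarith
            rw [hthdef] at this
            linarith
          have hpow : m ^ q ≤ |w2 r| ^ q := Real.rpow_le_rpow hmpos.le habs hq0.le
          have hre : (0:ℝ) ≤ r ^ (E-1) := (Real.rpow_pos_of_pos h0 _).le
          calc m ^ q * r ^ (E-1) = r ^ (E-1) * m ^ q := mul_comm _ _
          _ ≤ r ^ (E-1) * |w2 r| ^ q := mul_le_mul_of_nonneg_left hpow hre)
        have hw1e := hw1nn e hepos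
        linarith
      · push_neg at h2
        -- h2 : ∀ r, 0 < r → th/2 ≤ w2 r
        have h2q : ((2:ℝ)⁻¹) ^ (q+1) < 1 :=
          Real.rpow_lt_one (by norm_num) (by norm_num) hq1
        have h2qpos : (0:ℝ) < ((2:ℝ)⁻¹) ^ (q+1) := Real.rpow_pos_of_pos (by norm_num) _
        set c4 : ℝ := C - C * ((2:ℝ)⁻¹) ^ (q+1) with hc4
        have hc4pos : 0 < c4 := by rw [hc4]; nlinarith
        set c5 : ℝ := c4 ^ (1/(q+1)) with hc5
        have hc5pos : 0 < c5 := Real.rpow_pos_of_pos hc4pos _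
        have hc5q : 0 < c5 ^ q := Real.rpow_pos_of_pos hc5pos _
        have hJth2 : J q (th/2) = -(C * ((2:ℝ)⁻¹) ^ (q+1)) := by
          have hth2 : th/2 = -(C ^ (1/(q+1)) * 2⁻¹) := by rw [hthdef]; ring
          rw [hth2, J_neg, J_of_nonneg hq (by positivity),
            Real.mul_rpow hCq.le (by norm_num), rpow_root_cancel hC.le hq1']
        have hw1c5 : ∀ r, 0 < r → c5 ≤ w1 r := fun r h0 => by
          apply le_of_J_le hq
          rw [hc5, J_root hq hc4pos, hJw r h0]
          have : J q (th/2) ≤ J q (w2 r) := (J_mono hq).le_iff_le.2 (h2 r h0)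
          rw [hJth2] at this
          rw [hc4]
          linarith
        obtain ⟨e, hepos, hele, hebig⟩ :=
          exists_small hEneg 1 (c5 ^ q) (w2 1 - th/2) one_pos hc5q
        have hgrow := grow hE0 hd2' hepos hele (fun r hr => by
          have h0 : (0:ℝ) < r := lt_of_lt_of_le hepos hr.1
          have habs : c5 ≤ |w1 r| := (hw1c5 r h0).trans (le_abs_self _)
          have hpow : c5 ^ q ≤ |w1 r| ^ q := Real.rpow_le_rpow hc5pos.le habs hq0.le
          have hre : (0:ℝ) ≤ r ^ (E-1) := (Real.rpow_pos_of_pos h0 _).le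
          calc c5 ^ q * r ^ (E-1) = r ^ (E-1) * c5 ^ q := mul_comm _ _
          _ ≤ r ^ (E-1) * |w1 r| ^ q := mul_le_mul_of_nonneg_left hpow hre)
        have hw2e := h2 e hepos
        linarith
  · -- 0 < E : contradiction as r → ∞
    by_cases h1 : ∃ r0, 0 < r0 ∧ 0 < w2 r0
    · -- Bernoulli at +∞
      obtain ⟨r0, hr0, hw2r0⟩ := h1
      have hMpos : (0:ℝ) < (w2 r0) ^ (1-q) := Real.rpow_pos_of_pos hw2r0 _
      obtain ⟨R, hR, hRbig⟩ :=
        exists_big hEpos r0 (q-1) ((w2 r0) ^ (1-q)) hr0 (by linarith)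
      have hw2pos : ∀ r ∈ Set.Icc r0 R, 0 < w2 r := fun r hr =>
        lt_of_lt_of_le hw2r0 (mono2 r0 r hr0 hr.1)
      have hfacts : ∀ r ∈ Set.Icc r0 R, (w2 r) ^ q ≤ |w1 r| ^ q := by
        intro r hr
        have h0 : (0:ℝ) < r := lt_of_lt_of_le hr0 hr.1
        have hw2r := hw2pos r hr
        have hw1ge : w2 r ≤ w1 r := by
          apply le_of_J_le hq
          rw [hJw r h0]
          linarith
        have habs : w2 r ≤ |w1 r| := hw1ge.trans (le_abs_self _)
        exact Real.rpow_le_rpow hw2r.le habs hq0.le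
      have hber := key hR
        (fun r => -((w2 r) ^ (1-q)) - ((q-1)/E) * r ^ E)
        (fun r => -((r ^ (E-1) * |w1 r| ^ q) * (1-q) * (w2 r) ^ (1-q-1))
            - ((q-1)/E) * (E * r ^ (E-1)))
        (fun r hr => by
          have h0 : (0:ℝ) < r := lt_of_lt_of_le hr0 hr.1
          exact (((hd2' r h0).rpow_const (Or.inl (hw2pos r hr).ne')).neg).sub
            ((Real.hasDerivAt_rpow_const (Or.inl h0.ne')).const_mul ((q-1)/E)))
        (fun r hr => by
          have h0 : (0:ℝ) < r := lt_of_lt_of_le hr0 hr.1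
          have hw2r := hw2pos r hr
          have hpow := hfacts r hr
          have hre : (0:ℝ) < r ^ (E-1) := Real.rpow_pos_of_pos h0 _
          have hyq : (0:ℝ) < (w2 r) ^ (1-q-1) := Real.rpow_pos_of_pos hw2r _
          have hcancel : (w2 r) ^ (1-q-1) * (w2 r) ^ q = 1 := by
            rw [← Real.rpow_add hw2r, show (1-q-1+q : ℝ) = 0 by ring, Real.rpow_zero]
          have hEE : ((q-1)/E) * (E * r ^ (E-1)) = (q-1) * r ^ (E-1) := by
            field_simp
          rw [hEE]
          have h1 : (w2 r) ^ (1-q-1) * (w2 r) ^ q ≤ (w2 r) ^ (1-q-1) * |w1 r| ^ q :=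
            mul_le_mul_of_nonneg_left hpow hyq.le
          rw [hcancel] at h1
          have hmain : (q-1) * r ^ (E-1)
              ≤ (q-1) * ((w2 r) ^ (1-q-1) * (r ^ (E-1) * |w1 r| ^ q)) := by
            calc (q-1) * r ^ (E-1) = ((q-1) * r ^ (E-1)) * 1 := by ring
            _ ≤ ((q-1) * r ^ (E-1)) * ((w2 r) ^ (1-q-1) * |w1 r| ^ q) :=
              mul_le_mul_of_nonneg_left h1 (mul_nonneg (by linarith) hre.le)
            _ = (q-1) * ((w2 r) ^ (1-q-1) * (r ^ (E-1) * |w1 r| ^ q)) := by ring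
          have hrg : -((r ^ (E-1) * |w1 r| ^ q) * (1-q) * (w2 r) ^ (1-q-1))
              = (q-1) * ((w2 r) ^ (1-q-1) * (r ^ (E-1) * |w1 r| ^ q)) := by ring
          linarith [hmain, hrg])
      have hexpand : ((q-1)/E) * (R ^ E - r0 ^ E)
          = ((q-1)/E) * R ^ E - ((q-1)/E) * r0 ^ E := by ring
      have hRpos : (0:ℝ) < (w2 R) ^ (1-q) :=
        Real.rpow_pos_of_pos (hw2pos R ⟨hR, le_refl R⟩) _
      rw [hexpand] at hRbig
      linarith [hber, hRbig, hRpos]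
    · push_neg at h1
      -- h1 : ∀ r, 0 < r → w2 r ≤ 0
      by_cases h2 : ∃ r0, 0 < r0 ∧ th < w2 r0
      · obtain ⟨r0, hr0, hthw⟩ := h2
        have hc1 : 0 < C + J q (w2 r0) := by
          have := (J_mono hq) hthw
          rw [hJth] at this; linarith
        set c5 : ℝ := (C + J q (w2 r0)) ^ (1/(q+1)) with hc5
        have hc5pos : 0 < c5 := Real.rpow_pos_of_pos hc1 _
        have hc5q : (0:ℝ) < c5 ^ q := Real.rpow_pos_of_pos hc5pos _
        obtain ⟨R, hR, hRbig⟩ := exists_big hEpos r0 (c5 ^ q) (-(w2 r0)) hr0 hc5q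
        have hgrow := grow hE0 hd2' hr0 hR (fun r hr => by
          have h0 : (0:ℝ) < r := lt_of_lt_of_le hr0 hr.1
          have hw2mono := mono2 r0 r hr0 hr.1
          have hw1 : c5 ≤ w1 r := by
            apply le_of_J_le hq
            rw [hc5, J_root hq hc1, hJw r h0]
            have := (J_mono hq).le_iff_le.2 hw2mono
            linarith
          have habs : c5 ≤ |w1 r| := hw1.trans (le_abs_self _)
          have hpow : c5 ^ q ≤ |w1 r| ^ q := Real.rpow_le_rpow hc5pos.le habs hq0.le
          have hre : (0:ℝ) ≤ r ^ (E-1) := (Real.rpow_pos_of_pos h0 _).le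
          calc c5 ^ q * r ^ (E-1) = r ^ (E-1) * c5 ^ q := mul_comm _ _
          _ ≤ r ^ (E-1) * |w1 r| ^ q := mul_le_mul_of_nonneg_left hpow hre)
        have hw2R := h1 R (lt_of_lt_of_le hr0 hR)
        linarith
      · push_neg at h2
        -- h2 : ∀ r, 0 < r → w2 r ≤ th
        have hcq : (0:ℝ) < (C ^ (1/(q+1))) ^ q := Real.rpow_pos_of_pos hCq _
        obtain ⟨R, hR, hRbig⟩ :=
          exists_big hEpos 1 ((C ^ (1/(q+1))) ^ q) (-(w1 1)) one_pos hcq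
        have hgrow := grow hE0 hd1' one_pos hR (fun r hr => by
          have h0 : (0:ℝ) < r := lt_of_lt_of_le one_pos hr.1
          have hw2 : w2 r ≤ th := h2 r h0
          have habs : C ^ (1/(q+1)) ≤ |w2 r| := by
            rw [abs_of_nonpos (hw2.trans hthneg.le)]
            rw [hthdef] at hw2
            linarith
          have hpow : (C ^ (1/(q+1))) ^ q ≤ |w2 r| ^ q :=
            Real.rpow_le_rpow hCq.le habs hq0.le
          have hre : (0:ℝ) ≤ r ^ (E-1) := (Real.rpow_pos_of_pos h0 _).le
          calc (C ^ (1/(q+1))) ^ q * r ^ (E-1) = r ^ (E-1) * (C ^ (1/(q+1))) ^ q :=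
            mul_comm _ _
          _ ≤ r ^ (E-1) * |w2 r| ^ q := mul_le_mul_of_nonneg_left hpow hre)
        have hw1np : ∀ r, 0 < r → w1 r ≤ 0 := fun r h0 => by
          apply le_of_J_le hq
          rw [hJ0, hJw r h0]
          have hJ2 : J q (w2 r) ≤ -C := by
            rw [← hJth]; exact (J_mono hq).le_iff_le.2 (h2 r h0)
          linarith
        have h1R := hw1np R (lt_of_lt_of_le one_pos hR)
        have h11 := hw1np 1 one_pos
        linarith

lemma hasDerivAt_J {q : ℝ} (hq : 1 < q) (t : ℝ) :
    HasDerivAt (J q) ((q+1) * |t| ^ q) t := by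
  have hq0 : (0:ℝ) < q := by linarith
  rcases lt_trichotomy t 0 with ht | rfl | ht
  · -- t < 0
    have h1 : HasDerivAt (fun s : ℝ => -s) (-1) t := (hasDerivAt_id t).neg
    have h2 := (h1.rpow_const (p := q+1) (Or.inl (by simpa using ht.ne))).neg
    have heq : (fun s : ℝ => -((-s) ^ (q+1))) =ᶠ[nhds t] J q := by
      filter_upwards [Iio_mem_nhds ht] with s hs
      have hs' : s < 0 := hs
      rw [J, abs_of_neg hs']
      have : (-s) ^ (q+1) = (-s) ^ q * (-s) := Real.rpow_add_one (by simpa using hs'.ne) q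
      rw [this]; ring
    have h3 := h2.congr_of_eventuallyEq heq.symm
    refine h3.congr_deriv ?_
    rw [abs_of_neg ht]
    have : (q+1) - 1 = q := by ring
    rw [this]; ring
  · -- t = 0
    rw [hasDerivAt_iff_tendsto_slope]
    have habs : |(0:ℝ)| ^ q * (q+1) = 0 := by
      rw [abs_zero, Real.zero_rpow hq0.ne']; ring
    have hcont : Filter.Tendsto (fun s : ℝ => |s| ^ q) (nhds 0) (nhds ((q+1) * |(0:ℝ)| ^ q)) := by
      have h1 : ContinuousAt (fun y : ℝ => y ^ q) (|(0:ℝ)|) := by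
        rw [abs_zero]
        exact Real.continuousAt_rpow_const 0 q (Or.inr hq0.le)
      have h2 : ContinuousAt (fun s : ℝ => |s| ^ q) 0 := h1.comp continuous_abs.continuousAt
      have : (q+1) * |(0:ℝ)| ^ q = |(0:ℝ)| ^ q := by
        rw [abs_zero, Real.zero_rpow hq0.ne']; ring
      rw [this]
      exact h2.tendsto
    apply Filter.Tendsto.congr' _ (hcont.mono_left nhdsWithin_le_nhds)
    filter_upwards [self_mem_nhdsWithin] with s hs
    have hs' : s ≠ 0 := hs
    rw [slope_def_field, J, J]
    rw [abs_zero, Real.zero_rpow hq0.ne']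
    field_simp
    ring
  · -- 0 < t
    have h2 := Real.hasDerivAt_rpow_const (x := t) (p := q+1) (Or.inl ht.ne')
    have heq : (fun s : ℝ => s ^ (q+1)) =ᶠ[nhds t] J q := by
      filter_upwards [Ioi_mem_nhds ht] with s hs
      have hs' : (0:ℝ) < s := hs
      rw [J, abs_of_pos hs', Real.rpow_add_one hs'.ne' q]
    have h3 := h2.congr_of_eventuallyEq heq.symm
    refine h3.congr_deriv ?_
    rw [abs_of_pos ht]
    have : (q+1) - 1 = q := by ring
    rw [this]


end Stmt8Aux


open Stmt8Aux in
/-- For `p = q ≠ N/(N-1)` there is no global solution on `(0,∞)` of the first-order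
radial system with nonzero first integral; consequently every radial solution of the
Hamilton–Jacobi system with `p = q` on `ℝ^N \ {0}` satisfies `u₁' ≡ u₂'`. -/
theorem stmt8 (N q : ℝ) (hN : 3 ≤ N) (hq : 1 < q) (hqN : q ≠ N / (N - 1)) :
    (¬ ∃ (w1 w2 : ℝ → ℝ) (C : ℝ), C ≠ 0 ∧
      ContDiffOn ℝ 1 w1 (Set.Ioi 0) ∧ ContDiffOn ℝ 1 w2 (Set.Ioi 0) ∧
      (∀ r ∈ Set.Ioi (0:ℝ), deriv w1 r = r ^ ((N - 1) * (1 - q)) * |w2 r| ^ q) ∧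
      (∀ r ∈ Set.Ioi (0:ℝ), deriv w2 r = r ^ ((N - 1) * (1 - q)) * |w1 r| ^ q) ∧
      (∀ r ∈ Set.Ioi (0:ℝ), |w1 r| ^ q * w1 r - |w2 r| ^ q * w2 r = C))
    ∧
    (∀ u1 u2 : ℝ → ℝ, ContDiffOn ℝ 2 u1 (Set.Ioi 0) → ContDiffOn ℝ 2 u2 (Set.Ioi 0) →
      (∀ r ∈ Set.Ioi (0:ℝ),
        -(deriv (deriv u1) r + ((N - 1) / r) * deriv u1 r) = |deriv u2 r| ^ q) →
      (∀ r ∈ Set.Ioi (0:ℝ),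
        -(deriv (deriv u2) r + ((N - 1) / r) * deriv u2 r) = |deriv u1 r| ^ q) →
      ∀ r ∈ Set.Ioi (0:ℝ), deriv u1 r = deriv u2 r) := by
  constructor
  · rintro ⟨w1, w2, C, hC, hw1, hw2, hd1, hd2, hint⟩
    have hD1 : ∀ r ∈ Set.Ioi (0:ℝ), HasDerivAt w1 (r ^ ((N-1)*(1-q)) * |w2 r| ^ q) r := by
      intro r hr
      have hdiff : DifferentiableAt ℝ w1 r :=
        (hw1.differentiableOn one_ne_zero).differentiableAt (Ioi_mem_nhds hr)
      have := hdiff.hasDerivAt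
      rwa [hd1 r hr] at this
    have hD2 : ∀ r ∈ Set.Ioi (0:ℝ), HasDerivAt w2 (r ^ ((N-1)*(1-q)) * |w1 r| ^ q) r := by
      intro r hr
      have hdiff : DifferentiableAt ℝ w2 r :=
        (hw2.differentiableOn one_ne_zero).differentiableAt (Ioi_mem_nhds hr)
      have := hdiff.hasDerivAt
      rwa [hd2 r hr] at this
    rcases hC.lt_or_gt with hneg | hpos
    · exact no_sol hN hq hqN (neg_pos.2 hneg) hD2 hD1
        (fun r hr => by have := hint r hr; simp only [J]; linarith)
    · exact no_sol hN hq hqN hpos hD1 hD2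
        (fun r hr => by have := hint r hr; simp only [J]; linarith)
  · intro u1 u2 hu1 hu2 hA hB
    set w1 : ℝ → ℝ := fun s => -(s ^ (N-1) * deriv u1 s) with hw1def
    set w2 : ℝ → ℝ := fun s => -(s ^ (N-1) * deriv u2 s) with hw2def
    have hu1' : ContDiffOn ℝ 1 (deriv u1) (Set.Ioi 0) :=
      hu1.deriv_of_isOpen isOpen_Ioi (by norm_num)
    have hu2' : ContDiffOn ℝ 1 (deriv u2) (Set.Ioi 0) :=
      hu2.deriv_of_isOpen isOpen_Ioi (by norm_num)
    have hdd1 : ∀ s ∈ Set.Ioi (0:ℝ), HasDerivAt (deriv u1) (deriv (deriv u1) s) s := fun s hs =>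
      ((hu1'.differentiableOn one_ne_zero).differentiableAt (Ioi_mem_nhds hs)).hasDerivAt
    have hdd2 : ∀ s ∈ Set.Ioi (0:ℝ), HasDerivAt (deriv u2) (deriv (deriv u2) s) s := fun s hs =>
      ((hu2'.differentiableOn one_ne_zero).differentiableAt (Ioi_mem_nhds hs)).hasDerivAt
    have hmain : ∀ (v1 v2 : ℝ → ℝ),
        (∀ s ∈ Set.Ioi (0:ℝ), HasDerivAt (deriv v1) (deriv (deriv v1) s) s) →
        (∀ s ∈ Set.Ioi (0:ℝ),
          -(deriv (deriv v1) s + ((N - 1) / s) * deriv v1 s) = |deriv v2 s| ^ q) →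
        ∀ s ∈ Set.Ioi (0:ℝ),
          HasDerivAt (fun x => -(x ^ (N-1) * deriv v1 x))
            (s ^ ((N-1)*(1-q)) * |(fun x => -(x ^ (N-1) * deriv v2 x)) s| ^ q) s := by
      intro v1 v2 hdd hEqn s hs
      have hs0 : (0:ℝ) < s := hs
      have hP : HasDerivAt (fun x : ℝ => x ^ (N-1)) ((N-1) * s ^ (N-1-1)) s :=
        Real.hasDerivAt_rpow_const (Or.inl hs0.ne')
      have h1 := (hP.mul (hdd s hs)).neg
      refine h1.congr_deriv ?_
      have hrs : s ^ (N-1-1) = s ^ (N-1) / s := by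
        rw [show (N-1-1:ℝ) = (N-1) - 1 by ring, Real.rpow_sub hs0, Real.rpow_one]
      have hEq1 : -((N-1) * s ^ (N-1-1) * deriv v1 s + s ^ (N-1) * deriv (deriv v1) s)
          = s ^ (N-1) * (-(deriv (deriv v1) s + ((N - 1) / s) * deriv v1 s)) := by
        rw [hrs]; field_simp; ring
      rw [hEq1, hEqn s hs]
      have habs : |(fun x => -(x ^ (N-1) * deriv v2 x)) s| ^ q
          = s ^ ((N-1)*q) * |deriv v2 s| ^ q := by
        simp only [abs_neg, abs_mul, abs_of_pos (Real.rpow_pos_of_pos hs0 (N-1))]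
        rw [Real.mul_rpow (Real.rpow_nonneg hs0.le _) (abs_nonneg _), Real.rpow_mul hs0.le]
      rw [habs, ← mul_assoc, ← Real.rpow_add hs0,
        show (N-1)*(1-q) + (N-1)*q = N - 1 by ring]
    have hw1d : ∀ s ∈ Set.Ioi (0:ℝ), HasDerivAt w1 (s ^ ((N-1)*(1-q)) * |w2 s| ^ q) s :=
      hmain u1 u2 hdd1 hA
    have hw2d : ∀ s ∈ Set.Ioi (0:ℝ), HasDerivAt w2 (s ^ ((N-1)*(1-q)) * |w1 s| ^ q) s :=
      hmain u2 u1 hdd2 hB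
    set Φ : ℝ → ℝ := fun s => J q (w1 s) - J q (w2 s) with hPhi
    have hPd : ∀ s ∈ Set.Ioi (0:ℝ), HasDerivAt Φ 0 s := by
      intro s hs
      have h1 := (hasDerivAt_J hq (w1 s)).comp s (hw1d s hs)
      have h2 := (hasDerivAt_J hq (w2 s)).comp s (hw2d s hs)
      have h3 := h1.sub h2
      refine h3.congr_deriv ?_
      ring
    have hconst : ∀ a b, 0 < a → a ≤ b → Φ a = Φ b := by
      intro a b ha hab
      have h1 := key hab Φ (fun _ => 0)
        (fun s hs => hPd s (lt_of_lt_of_le ha hs.1)) (fun s _ => le_refl 0)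
      have h2 := key hab (fun s => -(Φ s)) (fun _ => 0)
        (fun s hs => by
          have h := (hPd s (lt_of_lt_of_le ha hs.1)).neg
          rw [neg_zero] at h
          exact h)
        (fun s _ => le_refl 0)
      linarith
    have hΦval : ∀ s, 0 < s → Φ s = Φ 1 := by
      intro s hs
      rcases le_total s 1 with h | h
      · exact hconst s 1 hs h
      · exact (hconst 1 s one_pos h).symm
    have hCz : Φ 1 = 0 := by
      by_contra hCz
      have hintP : ∀ s ∈ Set.Ioi (0:ℝ), J q (w1 s) - J q (w2 s) = Φ 1 := fun s hs =>
        hΦval s hs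
      rcases (Ne.lt_or_gt hCz) with hneg | hpos
      · exact no_sol hN hq hqN (neg_pos.2 hneg) hw2d hw1d
          (fun s hs => by have := hintP s hs; linarith)
      · exact no_sol hN hq hqN hpos hw1d hw2d hintP
    intro r hr
    have hr0 : (0:ℝ) < r := hr
    have hw : w1 r = w2 r := by
      apply (J_mono hq).injective
      have := hΦval r hr0
      rw [hCz] at this
      have hPr : J q (w1 r) - J q (w2 r) = 0 := this
      linarith
    have hrne : r ^ (N-1) ≠ 0 := (Real.rpow_pos_of_pos hr0 _).ne'
    have hw' : -(r ^ (N-1) * deriv u1 r) = -(r ^ (N-1) * deriv u2 r) := hw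
    exact mul_left_cancel₀ hrne (neg_inj.mp hw')
end

section
/- Let 𝐍 > 1, 𝐩 > 1, σ ∈ ℝ, 𝐪 > 𝐩 - 1 with σ = -𝐩(𝐍-1)/(𝐩-1) and 𝐩 ≠ 𝐍. Set d = ((𝐩-1)(𝐪-𝐩+1)/(𝐩(𝐩-𝐍))) · (𝐩/((𝐩-1)(𝐪+1)))^{1/𝐩}. Then for any c > 0, on any interval where c + d·r^{(𝐩-𝐍)/(𝐩-1)} > 0, the function w(r) = (c + d·r^{(𝐩-𝐍)/(𝐩-1)})^{-𝐩/(𝐪-𝐩+1)} satisfies -(|w'|^{𝐩-2}w')' - ((𝐍-1)/r)|w'|^{𝐩-2}w' = -r^σ w^𝐪. -/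
open Real Set Filter

private lemma aux_deriv (c d al mm : ℝ) (s : ℝ) (hs : 0 < s) (hU : 0 < c + d * s ^ al) :
    HasDerivAt (fun t : ℝ => (c + d * t ^ al) ^ mm)
      ((d * (al * s ^ (al - 1))) * mm * (c + d * s ^ al) ^ (mm - 1)) s := by
  have h1 : HasDerivAt (fun t : ℝ => c + d * t ^ al) (d * (al * s ^ (al - 1))) s :=
    ((Real.hasDerivAt_rpow_const (Or.inl hs.ne')).const_mul d).const_add c
  exact h1.rpow_const (Or.inl hU.ne')

private lemma aux_abs (x t : ℝ) (hx : 0 < x) : |(-x)| ^ t * (-x) = -(x ^ (t + 1)) := by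
  rw [abs_neg, abs_of_pos hx, Real.rpow_add_one hx.ne']
  ring

private lemma main_aux (p NN σ q c d al mm K e : ℝ) (a b : ℝ)
    (hK : 0 < K)
    (hA : mm * (d * al) = K)
    (h1N : (al - 1) * (p - 1) = 1 - NN)
    (hE : (-mm - 1) * (p - 1) = e)
    (hσ : σ = (1 - NN) + (al - 1))
    (hEq : -mm * q = e - 1)
    (hcoef : K ^ (p - 1) * (e * (d * al)) = -1)
    (ha : 0 < a)
    (hu : ∀ s ∈ Set.Ioo a b, 0 < c + d * s ^ al) :
    ∀ r ∈ Set.Ioo a b,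
      -(deriv (fun s : ℝ => |deriv (fun t : ℝ => (c + d * t ^ al) ^ (-mm)) s| ^ (p - 2) *
            deriv (fun t : ℝ => (c + d * t ^ al) ^ (-mm)) s) r)
          - ((NN - 1) / r) * (|deriv (fun t : ℝ => (c + d * t ^ al) ^ (-mm)) r| ^ (p - 2) *
            deriv (fun t : ℝ => (c + d * t ^ al) ^ (-mm)) r)
        = -(r ^ σ * ((c + d * r ^ al) ^ (-mm)) ^ q) := by
  intro r hr
  have hr0 : 0 < r := ha.trans hr.1
  have hU : 0 < c + d * r ^ al := hu r hr
  have hderiv : ∀ s ∈ Set.Ioo a b,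
      deriv (fun t : ℝ => (c + d * t ^ al) ^ (-mm)) s
        = -(K * (s ^ (al - 1) * (c + d * s ^ al) ^ (-mm - 1))) := by
    intro s hs
    have hs0 : 0 < s := ha.trans hs.1
    have hUs := hu s hs
    rw [(aux_deriv c d al (-mm) s hs0 hUs).deriv]
    linear_combination (-(s ^ (al - 1) * (c + d * s ^ al) ^ (-mm - 1))) * hA
  have hphi : ∀ s ∈ Set.Ioo a b,
      |deriv (fun t : ℝ => (c + d * t ^ al) ^ (-mm)) s| ^ (p - 2) *
          deriv (fun t : ℝ => (c + d * t ^ al) ^ (-mm)) s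
        = -(K ^ (p - 1) * (s ^ (1 - NN) * (c + d * s ^ al) ^ e)) := by
    intro s hs
    have hs0 : 0 < s := ha.trans hs.1
    have hUs := hu s hs
    have hT : 0 < K * (s ^ (al - 1) * (c + d * s ^ al) ^ (-mm - 1)) := by positivity
    rw [hderiv s hs, aux_abs _ _ hT, show p - 2 + 1 = p - 1 by ring,
      Real.mul_rpow hK.le (by positivity),
      Real.mul_rpow (by positivity) (by positivity),
      ← Real.rpow_mul hs0.le, ← Real.rpow_mul hUs.le, h1N, hE]
  have hgd : HasDerivAt (fun s : ℝ => -(K ^ (p - 1) * (s ^ (1 - NN) * (c + d * s ^ al) ^ e)))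
      (-(K ^ (p - 1) * ((1 - NN) * r ^ (1 - NN - 1) * ((c + d * r ^ al) ^ e)
        + r ^ (1 - NN) * ((d * (al * r ^ (al - 1))) * e * (c + d * r ^ al) ^ (e - 1))))) r := by
    have h1 : HasDerivAt (fun s : ℝ => s ^ (1 - NN)) ((1 - NN) * r ^ (1 - NN - 1)) r :=
      Real.hasDerivAt_rpow_const (Or.inl hr0.ne')
    have h2 := aux_deriv c d al e r hr0 hU
    exact ((h1.mul h2).const_mul (K ^ (p - 1))).neg
  have heq : (fun s : ℝ => |deriv (fun t : ℝ => (c + d * t ^ al) ^ (-mm)) s| ^ (p - 2) *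
        deriv (fun t : ℝ => (c + d * t ^ al) ^ (-mm)) s)
      =ᶠ[nhds r] (fun s : ℝ => -(K ^ (p - 1) * (s ^ (1 - NN) * (c + d * s ^ al) ^ e))) := by
    filter_upwards [Ioo_mem_nhds hr.1 hr.2] with s hs using hphi s hs
  rw [heq.deriv_eq, hgd.deriv, hphi r hr, ← Real.rpow_mul hU.le, hEq, hσ,
    Real.rpow_add hr0, show (1 : ℝ) - NN - 1 = (1 - NN) + (-1) by ring,
    Real.rpow_add hr0, Real.rpow_neg_one]
  linear_combination (r ^ ((1 : ℝ) - NN) * r ^ (al - 1) * (c + d * r ^ al) ^ (e - 1)) * hcoef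

/-- Explicit solutions of the radial `𝐩`-Laplace Hardy–Hénon equation with absorption
in generalized dimension `𝐍` when `σ = -𝐩(𝐍-1)/(𝐩-1)` and `𝐩 ≠ 𝐍`. -/
theorem stmt9 (NN p σ q c : ℝ) (hN : 1 < NN) (hp : 1 < p) (hq : p - 1 < q)
    (hσ : σ = -p * (NN - 1) / (p - 1)) (hpN : p ≠ NN) (hc : 0 < c) :
    let d := ((p - 1) * (q - p + 1) / (p * (p - NN))) * (p / ((p - 1) * (q + 1))) ^ (1 / p)
    let w : ℝ → ℝ := fun r => (c + d * r ^ ((p - NN) / (p - 1))) ^ (-(p / (q - p + 1)))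
    ∀ a b : ℝ, 0 < a →
      (∀ r ∈ Set.Ioo a b, 0 < c + d * r ^ ((p - NN) / (p - 1))) →
      ∀ r ∈ Set.Ioo a b,
        -(deriv (fun s : ℝ => |deriv w s| ^ (p - 2) * deriv w s) r)
            - ((NN - 1) / r) * (|deriv w r| ^ (p - 2) * deriv w r)
          = -(r ^ σ * w r ^ q) := by
  intro d w a b ha hu
  have hp0 : (0 : ℝ) < p := lt_trans one_pos hp
  have hp1 : (0 : ℝ) < p - 1 := by linarith
  have hq1 : (0 : ℝ) < q + 1 := by linarith
  have hqp : (0 : ℝ) < q - p + 1 := by linarith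
  have hpN' : p - NN ≠ 0 := sub_ne_zero.mpr hpN
  have hX0 : (0 : ℝ) < p / ((p - 1) * (q + 1)) := by positivity
  set K : ℝ := (p / ((p - 1) * (q + 1))) ^ (1 / p) with hKdef
  have hK : 0 < K := Real.rpow_pos_of_pos hX0 _
  have hd : d = ((p - 1) * (q - p + 1) / (p * (p - NN))) * K := rfl
  set e : ℝ := (-(p / (q - p + 1)) - 1) * (p - 1) with hedef
  have hKp : K ^ (p - 1) * K = p / ((p - 1) * (q + 1)) := by
    rw [← Real.rpow_add_one hK.ne', show p - 1 + 1 = p by ring, hKdef,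
      ← Real.rpow_mul hX0.le, one_div_mul_cancel hp0.ne', Real.rpow_one]
  have hcoef : K ^ (p - 1) * (e * (d * ((p - NN) / (p - 1)))) = -1 := by
    have h2 : e * (((p - 1) * (q - p + 1) / (p * (p - NN))) * ((p - NN) / (p - 1)))
        = -((p - 1) * (q + 1)) / p := by
      rw [hedef]; field_simp; ring
    have h3 : K ^ (p - 1) * (e * (d * ((p - NN) / (p - 1))))
        = (K ^ (p - 1) * K) * (e * (((p - 1) * (q - p + 1) / (p * (p - NN))) * ((p - NN) / (p - 1)))) := by
      rw [hd]; ring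
    rw [h3, hKp, h2]
    field_simp
  exact main_aux p NN σ q c d ((p - NN) / (p - 1)) (p / (q - p + 1)) K e a b hK
    (by rw [hd]; field_simp)
    (by field_simp; ring)
    rfl
    (by rw [hσ]; field_simp; ring)
    (by rw [hedef]; field_simp; ring)
    hcoef ha hu
end

section
/- Let 𝐍 = 𝐩 > 1 and 𝐪 > 𝐍 - 1. Set d = ((𝐪-𝐍+1)/𝐍)·(𝐍/((𝐍-1)(𝐪+1)))^{1/𝐍}. Then for any C ∈ ℝ, on any interval of (0,∞) where C + d·ln r > 0, the function w(r) = (C + d·ln r)^{-𝐍/(𝐪-𝐍+1)} satisfies -(|w'|^{𝐍-2}w')' - ((𝐍-1)/r)|w'|^{𝐍-2}w' = -r^{-𝐍} w^𝐪. -/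
open Real Set

/-- Explicit logarithmic solutions of the radial `𝐍`-Laplace equation with absorption
and Hardy weight `r^(-𝐍)` in the limit case `𝐩 = 𝐍 = -σ`. -/
theorem stmt10 (NN q C : ℝ) (hN : 1 < NN) (hq : NN - 1 < q) :
    let d := ((q - NN + 1) / NN) * (NN / ((NN - 1) * (q + 1))) ^ (1 / NN)
    let w : ℝ → ℝ := fun r => (C + d * Real.log r) ^ (-(NN / (q - NN + 1)))
    ∀ a b : ℝ, 0 < a →
      (∀ r ∈ Set.Ioo a b, 0 < C + d * Real.log r) →
      ∀ r ∈ Set.Ioo a b,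
        -(deriv (fun s : ℝ => |deriv w s| ^ (NN - 2) * deriv w s) r)
            - ((NN - 1) / r) * (|deriv w r| ^ (NN - 2) * deriv w r)
          = -(r ^ (-NN) * w r ^ q) := by
  intro d w a b ha hpos r hr
  set α : ℝ := NN / (q - NN + 1) with hα_def
  set k : ℝ := NN / ((NN - 1) * (q + 1)) with hk_def
  have hddef : d = ((q - NN + 1) / NN) * k ^ (1 / NN) := rfl
  have hwdef : w = fun r => (C + d * Real.log r) ^ (-α) := rfl
  have hN0 : (0:ℝ) < NN := by linarith
  have hN1 : (0:ℝ) < NN - 1 := by linarith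
  have hqN : (0:ℝ) < q - NN + 1 := by linarith
  have hq1 : (0:ℝ) < q + 1 := by nlinarith
  have hk : (0:ℝ) < k := div_pos hN0 (mul_pos hN1 hq1)
  have hd : 0 < d := by
    rw [hddef]; exact mul_pos (div_pos hqN hN0) (Real.rpow_pos_of_pos hk _)
  have hα : 0 < α := div_pos hN0 hqN
  set β : ℝ := -((α + 1) * (NN - 1)) with hβ_def
  set K : ℝ := (α * d) ^ (NN - 1) with hK_def
  have hαd : 0 < α * d := mul_pos hα hd
  have hK : 0 < K := Real.rpow_pos_of_pos hαd _
  -- derivative of w on the interval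
  have hw : ∀ s ∈ Ioo a b, HasDerivAt w (-((α * d) * s⁻¹ * (C + d * Real.log s) ^ (-α - 1))) s := by
    intro s hs
    have hs0 : 0 < s := lt_trans ha hs.1
    have hu : 0 < C + d * Real.log s := hpos s hs
    have h1 : HasDerivAt (fun s : ℝ => C + d * Real.log s) (d * s⁻¹) s :=
      ((Real.hasDerivAt_log hs0.ne').const_mul d).const_add C
    have h2 : HasDerivAt (fun x : ℝ => x ^ (-α)) (-α * (C + d * Real.log s) ^ (-α - 1))
        (C + d * Real.log s) := Real.hasDerivAt_rpow_const (Or.inl hu.ne')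
    have h3 := h2.comp s h1
    rw [hwdef]
    exact h3.congr_deriv (by ring)
  -- the nonlinear flux equals an explicit function on the interval
  have hg : ∀ s ∈ Ioo a b, |deriv w s| ^ (NN - 2) * deriv w s
      = -(K * s ^ (-(NN - 1)) * (C + d * Real.log s) ^ β) := by
    intro s hs
    have hs0 : 0 < s := lt_trans ha hs.1
    have hu : 0 < C + d * Real.log s := hpos s hs
    have hds : deriv w s = -((α * d) * s⁻¹ * (C + d * Real.log s) ^ (-α - 1)) :=
      (hw s hs).deriv
    set D : ℝ := (α * d) * s⁻¹ * (C + d * Real.log s) ^ (-α - 1) with hD_def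
    have hD : 0 < D :=
      mul_pos (mul_pos hαd (inv_pos.mpr hs0)) (Real.rpow_pos_of_pos hu _)
    rw [hds, abs_neg, abs_of_pos hD]
    have h1 : D ^ (NN - 2) * (-D) = -(D ^ (NN - 1)) := by
      have : D ^ (NN - 1) = D ^ (NN - 2) * D := by
        rw [show NN - 1 = (NN - 2) + 1 by ring, Real.rpow_add_one hD.ne']
      rw [this]; ring
    rw [h1]
    have h2 : D ^ (NN - 1) = K * s ^ (-(NN - 1)) * (C + d * Real.log s) ^ β := by
      rw [hD_def, Real.mul_rpow (mul_pos hαd (inv_pos.mpr hs0)).le (Real.rpow_pos_of_pos hu _).le,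
        Real.mul_rpow hαd.le (inv_pos.mpr hs0).le,
        ← Real.rpow_neg_one s, ← Real.rpow_mul hs0.le, ← Real.rpow_mul hu.le, hK_def]
      congr 1
      · congr 1; ring
      · congr 1; rw [hβ_def]; ring
    rw [h2]
  -- the explicit function and its derivative
  set G : ℝ → ℝ := fun s => -(K * s ^ (-(NN - 1)) * (C + d * Real.log s) ^ β) with hG_def
  have hr0 : 0 < r := lt_trans ha hr.1
  have hu : 0 < C + d * Real.log r := hpos r hr
  have hG : HasDerivAt G
      (-(K * ((-(NN - 1)) * r ^ (-(NN - 1) - 1) * (C + d * Real.log r) ^ β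
        + r ^ (-(NN - 1)) * (β * (C + d * Real.log r) ^ (β - 1) * (d * r⁻¹))))) r := by
    have h1 : HasDerivAt (fun s : ℝ => s ^ (-(NN - 1))) ((-(NN - 1)) * r ^ (-(NN - 1) - 1)) r :=
      Real.hasDerivAt_rpow_const (Or.inl hr0.ne')
    have h2 : HasDerivAt (fun s : ℝ => (C + d * Real.log s) ^ β)
        (β * (C + d * Real.log r) ^ (β - 1) * (d * r⁻¹)) r := by
      have ha1 : HasDerivAt (fun s : ℝ => C + d * Real.log s) (d * r⁻¹) r :=
        ((Real.hasDerivAt_log hr0.ne').const_mul d).const_add C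
      have ha2 : HasDerivAt (fun x : ℝ => x ^ β) (β * (C + d * Real.log r) ^ (β - 1))
          (C + d * Real.log r) := Real.hasDerivAt_rpow_const (Or.inl hu.ne')
      exact ha2.comp r ha1
    have h3 := (h1.mul h2).const_mul (-K)
    rw [hG_def]
    refine (h3.congr_deriv ?_).congr_of_eventuallyEq (Filter.Eventually.of_forall fun s => ?_)
    · ring
    · simp only [Pi.mul_apply]; ring
  -- the deriv in the statement equals deriv G at r
  have hderiv_eq : deriv (fun s : ℝ => |deriv w s| ^ (NN - 2) * deriv w s) r = deriv G r := by
    apply Filter.EventuallyEq.deriv_eq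
    filter_upwards [isOpen_Ioo.mem_nhds hr] with s hs
    exact hg s hs
  rw [hderiv_eq, hG.deriv, hg r hr, hwdef]
  -- now pure computation with rpow
  set u : ℝ := C + d * Real.log r with hu_def
  -- exponent identities
  have hαq : α * (q - NN + 1) = NN := div_mul_cancel₀ NN hqN.ne'
  have hexp : β - 1 = -α * q := by
    rw [hβ_def, hα_def]; field_simp; ring
  -- coefficient identity : K * (α+1) * (NN-1) * d = 1
  have hαdk : α * d = k ^ (1 / NN) := by
    rw [hddef, hα_def]; field_simp
  have hdk : d = α⁻¹ * k ^ (1 / NN) := by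
    rw [hddef, hα_def]; field_simp
  have hKd : K * d = α⁻¹ * k := by
    have h1 : K = k ^ (1 / NN * (NN - 1)) := by
      rw [hK_def, hαdk, ← Real.rpow_mul hk.le]
    have h2 : k ^ (1 / NN * (NN - 1)) * k ^ (1 / NN) = k := by
      rw [← Real.rpow_add hk, show 1 / NN * (NN - 1) + 1 / NN = 1 by field_simp; ring, Real.rpow_one]
    rw [h1, hdk, show k ^ (1 / NN * (NN - 1)) * (α⁻¹ * k ^ (1 / NN))
      = α⁻¹ * (k ^ (1 / NN * (NN - 1)) * k ^ (1 / NN)) by ring, h2]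
  have hcoef : K * (α + 1) * (NN - 1) * d = 1 := by
    have : K * (α + 1) * (NN - 1) * d = (K * d) * ((α + 1) * (NN - 1)) := by ring
    rw [this, hKd, hk_def, hα_def]
    field_simp
    ring
  -- rpow manipulations for r
  have hrinv : r⁻¹ = r ^ (-1 : ℝ) := (Real.rpow_neg_one r).symm
  have hr1 : r ^ (-(NN - 1) - 1) = r ^ (-NN) := by norm_num
  have hr2 : r ^ (-(NN - 1)) * r⁻¹ = r ^ (-NN) := by
    rw [hrinv, ← Real.rpow_add hr0]; congr 1; ring
  have hr3 : ((NN - 1) / r) * r ^ (-(NN - 1)) = (NN - 1) * r ^ (-NN) := by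
    rw [div_eq_mul_inv, mul_assoc, mul_comm r⁻¹ _, hr2]
  -- u manipulations
  have hu1 : (u ^ (-α)) ^ q = u ^ (β - 1) := by
    rw [hexp, ← Real.rpow_mul hu.le]
  have hu2 : u ^ β = u ^ (β - 1) * u := by
    rw [← Real.rpow_add_one hu.ne' (β - 1)]; congr 1; ring
  rw [hu1, hu2]
  have expand : -(-(K * (-(NN - 1) * r ^ (-(NN - 1) - 1) * (u ^ (β - 1) * u) +
        r ^ (-(NN - 1)) * (β * u ^ (β - 1) * (d * r⁻¹))))) -
      (NN - 1) / r * -(K * r ^ (-(NN - 1)) * (u ^ (β - 1) * u))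
      = K * (-(NN - 1)) * (r ^ (-(NN - 1) - 1)) * (u ^ (β - 1) * u)
        + K * β * d * (r ^ (-(NN - 1)) * r⁻¹) * u ^ (β - 1)
        + ((NN - 1) / r * r ^ (-(NN - 1))) * (K * (u ^ (β - 1) * u)) := by
    ring
  rw [expand, hr1, hr2, hr3]
  have : K * β * d = -1 := by
    rw [hβ_def]; linear_combination -hcoef
  rw [this]
  ring
end

section
/- Let 𝐍 > 𝐩 > 1, σ > -𝐩, 𝐪 = 𝐪_S := (𝐍(𝐩-1) + 𝐩 + 𝐩σ)/(𝐍-𝐩). For c > 0 set d = c^{𝐪-𝐩+1}(𝐍+σ)^{-1}((𝐍-𝐩)/(𝐩-1))^{1-𝐩}. Then w(r) = c·(d + r^{(𝐩+σ)/(𝐩-1)})^{-(𝐍-𝐩)/(𝐩+σ)} is positive on (0,∞) and satisfies -(|w'|^{𝐩-2}w')' - ((𝐍-1)/r)|w'|^{𝐩-2}w' = r^σ w^𝐪 for all r > 0. -/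
/-- The explicit ground states of the radial `𝐩`-Laplace Hardy–Hénon equation with
source at the critical Sobolev exponent `𝐪_S`, in generalized dimension `𝐍 > 𝐩 > -σ`. -/
theorem stmt11 (NN p σ c : ℝ) (hp : 1 < p) (hNp : p < NN) (hσ : -p < σ) (hc : 0 < c) :
    let qS := (NN * (p - 1) + p + p * σ) / (NN - p)
    let d := c ^ (qS - p + 1) * (NN + σ)⁻¹ * ((NN - p) / (p - 1)) ^ (1 - p)
    let w : ℝ → ℝ := fun r => c * (d + r ^ ((p + σ) / (p - 1))) ^ (-(NN - p) / (p + σ))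
    ∀ r > (0:ℝ), 0 < w r ∧
      -(deriv (fun s : ℝ => |deriv w s| ^ (p - 2) * deriv w s) r)
          - ((NN - 1) / r) * (|deriv w r| ^ (p - 2) * deriv w r)
        = r ^ σ * w r ^ qS := by
  intro qS d w r hr
  have hp1 : (0:ℝ) < p - 1 := by linarith
  have hps : (0:ℝ) < p + σ := by linarith
  have hNp' : (0:ℝ) < NN - p := by linarith
  have hNσ : (0:ℝ) < NN + σ := by linarith
  have hR : (0:ℝ) < (NN - p) / (p - 1) := div_pos hNp' hp1
  set α : ℝ := (p + σ) / (p - 1) with hα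
  set β : ℝ := (NN - p) / (p + σ) with hβ
  have hαpos : (0:ℝ) < α := div_pos hps hp1
  have hβpos : (0:ℝ) < β := div_pos hNp' hps
  have hd : 0 < d := by
    unfold d
    exact mul_pos (mul_pos (Real.rpow_pos_of_pos hc _) (inv_pos.mpr hNσ))
      (Real.rpow_pos_of_pos hR _)
  have hXpos : ∀ s : ℝ, 0 < s → (0:ℝ) < d + s ^ α := by
    intro s hs; positivity
  have hXr : (0:ℝ) < d + r ^ α := hXpos r hr
  have hw_eq : w = fun x : ℝ => c * (d + x ^ α) ^ (-β) := by
    funext x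
    show c * (d + x ^ ((p + σ) / (p - 1))) ^ (-(NN - p) / (p + σ)) = _
    rw [hα, hβ, neg_div]
  obtain ⟨K, hK⟩ : ∃ K : ℝ, K = c * β * α := ⟨_, rfl⟩
  have hKpos : 0 < K := hK ▸ mul_pos (mul_pos hc hβpos) hαpos
  have hwD : ∀ s : ℝ, 0 < s →
      HasDerivAt w (-(K * (s ^ (α - 1) * (d + s ^ α) ^ (-β - 1)))) s := by
    intro s hs
    have h1 : HasDerivAt (fun x : ℝ => x ^ α) (α * s ^ (α - 1)) s :=
      Real.hasDerivAt_rpow_const (Or.inl hs.ne')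
    have h2 : HasDerivAt (fun x : ℝ => d + x ^ α) (α * s ^ (α - 1)) s := h1.const_add d
    have h3 : HasDerivAt (fun x : ℝ => (d + x ^ α) ^ (-β))
        (α * s ^ (α - 1) * -β * (d + s ^ α) ^ (-β - 1)) s :=
      h2.rpow_const (Or.inl (hXpos s hs).ne')
    have h4 := h3.const_mul c
    rw [hw_eq]
    convert h4 using 1
    · rfl
    · rfl
    rw [hK]; ring
  have hderivw : ∀ s : ℝ, 0 < s →
      deriv w s = -(K * (s ^ (α - 1) * (d + s ^ α) ^ (-β - 1))) := fun s hs => (hwD s hs).deriv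
  have he1 : (α - 1) * (p - 1) = σ + 1 := by
    rw [hα]; field_simp; ring
  obtain ⟨e2, he2def⟩ : ∃ e2 : ℝ, e2 = (-β - 1) * (p - 1) := ⟨_, rfl⟩
  obtain ⟨Φ, hΦ⟩ : ∃ Φ : ℝ → ℝ, Φ = fun s => -(K ^ (p - 1) * (s ^ (σ + 1) * (d + s ^ α) ^ e2)) :=
    ⟨_, rfl⟩
  have hgΦ : ∀ s : ℝ, 0 < s → |deriv w s| ^ (p - 2) * deriv w s = Φ s := by
    intro s hs
    have hXs := hXpos s hs
    have hy : (0:ℝ) < K * (s ^ (α - 1) * (d + s ^ α) ^ (-β - 1)) :=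
      mul_pos hKpos (mul_pos (Real.rpow_pos_of_pos hs _) (Real.rpow_pos_of_pos hXs _))
    have h5 : (K * (s ^ (α - 1) * (d + s ^ α) ^ (-β - 1))) ^ (p - 2) *
        (K * (s ^ (α - 1) * (d + s ^ α) ^ (-β - 1))) =
        (K * (s ^ (α - 1) * (d + s ^ α) ^ (-β - 1))) ^ (p - 1) := by
      rw [← Real.rpow_add_one hy.ne']
      congr 1; ring
    rw [hderivw s hs, abs_neg, abs_of_pos hy, mul_neg, h5]
    simp only [hΦ]
    rw [he2def, Real.mul_rpow hKpos.le (by positivity),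
      Real.mul_rpow (by positivity) (by positivity),
      ← Real.rpow_mul hs.le, ← Real.rpow_mul hXs.le, he1]
  have hΦD : HasDerivAt Φ
      (-(K ^ (p - 1) * ((σ + 1) * r ^ σ * (d + r ^ α) ^ e2 +
        r ^ (σ + 1) * (e2 * (d + r ^ α) ^ (e2 - 1) * (α * r ^ (α - 1)))))) r := by
    have h1 : HasDerivAt (fun x : ℝ => x ^ (σ + 1)) ((σ + 1) * r ^ (σ + 1 - 1)) r :=
      Real.hasDerivAt_rpow_const (Or.inl hr.ne')
    have h2 : HasDerivAt (fun x : ℝ => x ^ α) (α * r ^ (α - 1)) r :=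
      Real.hasDerivAt_rpow_const (Or.inl hr.ne')
    have h3 : HasDerivAt (fun x : ℝ => (d + x ^ α) ^ e2)
        (α * r ^ (α - 1) * e2 * (d + r ^ α) ^ (e2 - 1)) r :=
      (h2.const_add d).rpow_const (Or.inl hXr.ne')
    have h4 := ((h1.mul h3).const_mul (K ^ (p - 1))).neg
    rw [hΦ]
    convert h4 using 2
    · rfl
    · rfl
    · rfl
    · rfl
    rw [show σ + 1 - 1 = σ by ring]
    ring
  have hEq : (fun s : ℝ => |deriv w s| ^ (p - 2) * deriv w s) =ᶠ[nhds r] Φ :=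
    Filter.eventuallyEq_of_mem (isOpen_Ioi.mem_nhds hr) (fun s hs => hgΦ s hs)
  refine ⟨?_, ?_⟩
  · simp only [hw_eq]
    exact mul_pos hc (Real.rpow_pos_of_pos hXr _)
  rw [hEq.deriv_eq, hΦD.deriv, hgΦ r hr]
  simp only [hΦ, hw_eq]
  rw [Real.mul_rpow hc.le (Real.rpow_pos_of_pos hXr _).le, ← Real.rpow_mul hXr.le]
  have hexp : -β * qS = e2 - 1 := by
    rw [he2def, hβ]
    unfold qS
    field_simp
    ring
  have he2α : e2 * α = -(NN + σ) := by
    rw [he2def, hβ, hα]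
    field_simp
    ring
  have he2val : e2 = -(NN + σ) / α := by
    rw [eq_div_iff hαpos.ne']; exact he2α
  have hβα : β * α = (NN - p) / (p - 1) := by
    rw [hβ, hα]
    field_simp
  have hcoef : K ^ (p - 1) * (NN + σ) * d = c ^ qS := by
    have hKval : K = c * ((NN - p) / (p - 1)) := by rw [hK, mul_assoc, hβα]
    rw [hKval, Real.mul_rpow hc.le hR.le]
    unfold d
    rw [show c ^ (p - 1) * ((NN - p) / (p - 1)) ^ (p - 1) * (NN + σ) *
        (c ^ (qS - p + 1) * (NN + σ)⁻¹ * ((NN - p) / (p - 1)) ^ (1 - p)) =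
        (c ^ (p - 1) * c ^ (qS - p + 1)) *
          (((NN - p) / (p - 1)) ^ (p - 1) * ((NN - p) / (p - 1)) ^ (1 - p)) *
        ((NN + σ) * (NN + σ)⁻¹) from by ring]
    rw [← Real.rpow_add hc, ← Real.rpow_add hR, mul_inv_cancel₀ hNσ.ne',
      show p - 1 + (qS - p + 1) = qS by ring, show p - 1 + (1 - p) = (0:ℝ) by ring,
      Real.rpow_zero, mul_one, mul_one]
  rw [hexp]
  have hXe2 : (d + r ^ α) ^ e2 = (d + r ^ α) ^ (e2 - 1) * (d + r ^ α) := by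
    rw [← Real.rpow_add_one hXr.ne' (e2 - 1)]
    congr 1; ring
  rw [Real.rpow_add_one hr.ne' σ, hXe2]
  have hra : r ^ (α - 1) = r ^ α / r := by rw [Real.rpow_sub hr, Real.rpow_one]
  rw [hra, he2val, ← hcoef]
  field_simp
  ring
end

section
/- Let 𝐩 > 1, 𝐪 > 𝐩 - 1, 𝐍, σ ∈ ℝ. Let w be a positive C² solution of the equation -(|w'|^{𝐩-2}w')' - ((𝐍-1)/r)|w'|^{𝐩-2}w' = ε r^σ w^𝐪 (ε = ±1) on an interval where w' ≠ 0. Define s(t) = -r w'(r)/w(r) and z(t) = -ε r^{1+σ} w(r)^𝐪 |w'(r)|^{-𝐩} w'(r), with t = ln r. Then (s,z) solves the autonomous system s_t = s((𝐩-𝐍)/(𝐩-1) + s + z/(𝐩-1)), z_t = z(𝐍 + σ - 𝐪 s - z), and w(r) = r^{-γ}(|s|^{𝐩-1}|z|)^{1/(𝐪+1-𝐩)} where γ = (𝐩+σ)/(𝐪+1-𝐩). -/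
lemma absPow_hasDerivAt (e : ℝ) {c : ℝ} (hc : c ≠ 0) :
    HasDerivAt (fun x : ℝ => |x| ^ e * x) ((e + 1) * |c| ^ e) c := by
  have hA : (0:ℝ) < |c| := abs_pos.mpr hc
  have h1 : HasDerivAt (fun x : ℝ => |x| ^ e)
      (e * |c| ^ (e - 1) * (SignType.sign c : ℝ)) c :=
    (Real.hasDerivAt_rpow_const (p := e) (Or.inl hA.ne')).comp c (hasDerivAt_abs hc)
  have h2 := h1.mul (hasDerivAt_id c)
  have hsc : (SignType.sign c : ℝ) * c = |c| := by
    rcases hc.lt_or_gt with h | h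
    · simp [sign_neg h, abs_of_neg h]
    · simp [sign_pos h, abs_of_pos h]
  have hre : |c| ^ (e - 1) * |c| = |c| ^ e := by
    rw [← Real.rpow_add_one hA.ne' (e - 1)]; ring_nf
  refine h2.congr_deriv (Eq.symm ?_)
  rw [id_def, mul_one]
  calc (e + 1) * |c| ^ e = e * (|c| ^ (e-1) * |c|) + |c| ^ e := by rw [hre]; ring
  _ = e * |c| ^ (e - 1) * (SignType.sign c : ℝ) * c + |c| ^ e := by
      rw [mul_assoc (e * |c| ^ (e-1)), hsc]; ring

/-- The logarithmic substitution `s(t) = -r w'/w`, `z(t) = -ε r^(1+σ) w^𝐪 |w'|^(-𝐩) w'`,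
`t = ln r`, turns the radial `𝐩`-Laplace Hardy–Hénon equation into a quadratic
autonomous system, and `w` is recovered by `w = r^(-γ)(|s|^(𝐩-1)|z|)^(1/(𝐪+1-𝐩))`. -/
theorem stmt13 (p q NN σ ε : ℝ) (hp : 1 < p) (hq : p - 1 < q)
    (hε : ε = 1 ∨ ε = -1) (a b : ℝ) (ha : 0 < a)
    (w : ℝ → ℝ) (hw : ContDiffOn ℝ 2 w (Set.Ioo a b))
    (hwpos : ∀ r ∈ Set.Ioo a b, 0 < w r)
    (hw' : ∀ r ∈ Set.Ioo a b, deriv w r ≠ 0)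
    (heq : ∀ r ∈ Set.Ioo a b,
      -(deriv (fun s : ℝ => |deriv w s| ^ (p - 2) * deriv w s) r)
          - ((NN - 1) / r) * (|deriv w r| ^ (p - 2) * deriv w r)
        = ε * r ^ σ * w r ^ q) :
    let S : ℝ → ℝ := fun t => -(Real.exp t * deriv w (Real.exp t) / w (Real.exp t))
    let Z : ℝ → ℝ := fun t =>
      -(ε * Real.exp t ^ (1 + σ) * w (Real.exp t) ^ q *
        |deriv w (Real.exp t)| ^ (-p) * deriv w (Real.exp t))
    ∀ t : ℝ, Real.exp t ∈ Set.Ioo a b →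
      deriv S t = S t * ((p - NN) / (p - 1) + S t + Z t / (p - 1)) ∧
      deriv Z t = Z t * (NN + σ - q * S t - Z t) ∧
      w (Real.exp t) =
        Real.exp t ^ (-((p + σ) / (q + 1 - p))) *
          (|S t| ^ (p - 1) * |Z t|) ^ (1 / (q + 1 - p)) := by
  intro S Z t ht
  set r : ℝ := Real.exp t with hrdef
  have hopen : IsOpen (Set.Ioo a b) := isOpen_Ioo
  have hmem : Set.Ioo a b ∈ nhds r := hopen.mem_nhds ht
  have hr : 0 < r := Real.exp_pos t
  have hwr : 0 < w r := hwpos r ht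
  have hw1r : deriv w r ≠ 0 := hw' r ht
  set w1 : ℝ → ℝ := deriv w with hw1def
  set A : ℝ := |w1 r| with hAdef
  have hA : 0 < A := abs_pos.mpr hw1r
  have hp1 : (0:ℝ) < p - 1 := by linarith
  -- differentiability
  have hwd : HasDerivAt w (w1 r) r := by
    have := ((hw.differentiableOn (by norm_num)).differentiableAt hmem)
    exact this.hasDerivAt
  have hw1diff : DifferentiableAt ℝ w1 r := by
    have h1 : ContDiffOn ℝ 1 w1 (Set.Ioo a b) :=
      hw.deriv_of_isOpen hopen (by norm_num)
    exact (h1.differentiableOn (by norm_num)).differentiableAt hmem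
  set w2 : ℝ := deriv w1 r with hw2def
  have hw1d : HasDerivAt w1 w2 r := hw1diff.hasDerivAt
  -- the equation at r
  have hφ : HasDerivAt (fun s : ℝ => |w1 s| ^ (p - 2) * w1 s)
      ((p - 2 + 1) * A ^ (p - 2) * w2) r :=
    (absPow_hasDerivAt (p - 2) hw1r).comp r hw1d
  have E1 : -((p - 2 + 1) * A ^ (p - 2) * w2) - ((NN - 1) / r) * (A ^ (p - 2) * w1 r)
      = ε * r ^ σ * w r ^ q := by
    have := heq r ht
    rwa [hφ.deriv] at this
  have E2 : (p - 1) * (A ^ (p - 2) * w2) * r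
      = -((NN - 1) * (A ^ (p - 2) * w1 r)) - ε * r ^ σ * w r ^ q * r := by
    field_simp at E1
    linear_combination -E1
  have hBinv : A ^ (p - 2) * (A ^ (-p) * (w1 r * w1 r)) = 1 := by
    have h2 : w1 r * w1 r = A * A := (abs_mul_abs_self (w1 r)).symm
    rw [h2, show A * A = A ^ (1:ℝ) * A ^ (1:ℝ) by rw [Real.rpow_one],
      ← Real.rpow_add hA, ← Real.rpow_add hA, ← Real.rpow_add hA]
    norm_num
  have hw2f : w2 = (-((NN - 1) * w1 r)
      - ε * r ^ σ * w r ^ q * r * (A ^ (-p) * (w1 r * w1 r))) / ((p - 1) * r) := by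
    rw [eq_div_iff (by positivity)]
    linear_combination (A ^ (-p) * (w1 r * w1 r)) * E2
      - ((p - 1) * w2 * r + (NN - 1) * w1 r) * hBinv
  have hr1σ : r ^ (1 + σ) = r * r ^ σ := by
    rw [Real.rpow_add hr, Real.rpow_one]
  -- derivative pieces over t
  have hre : HasDerivAt Real.exp r t := by simpa using Real.hasDerivAt_exp t
  have hWc : HasDerivAt (fun u => w (Real.exp u)) (w1 r * r) t := hwd.comp t hre
  have hW1c : HasDerivAt (fun u => w1 (Real.exp u)) (w2 * r) t := by have := hw1d.comp t hre; exact this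
  -- deriv of S
  have hSd : HasDerivAt S
      (-(((1 * w1 r + r * w2) * r * w r - r * w1 r * (w1 r * r)) / w r ^ 2)) t := by
    have hnum : HasDerivAt (fun u => Real.exp u * w1 (Real.exp u))
        (r * w1 r + r * (w2 * r)) t := hre.mul hW1c
    have := (hnum.div hWc hwr.ne').neg
    refine this.congr_deriv ?_
    ring
  -- deriv of Z
  have hG : HasDerivAt (fun s : ℝ => |w1 s| ^ (-p) * w1 s)
      ((-p + 1) * A ^ (-p) * w2) r :=
    (absPow_hasDerivAt (-p) hw1r).comp r hw1d
  have hGc : HasDerivAt (fun u => |w1 (Real.exp u)| ^ (-p) * w1 (Real.exp u))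
      ((-p + 1) * A ^ (-p) * w2 * r) t := by have := hG.comp t hre; exact this
  have hE1σ : HasDerivAt (fun u => Real.exp u ^ (1 + σ))
      ((1 + σ) * r ^ (1 + σ - 1) * r) t := by
    have := (Real.hasDerivAt_rpow_const (p := 1 + σ) (Or.inl hr.ne')).comp t hre; exact this
  have hWq : HasDerivAt (fun u => w (Real.exp u) ^ q)
      (q * w r ^ (q - 1) * (w1 r * r)) t := by
    have := (Real.hasDerivAt_rpow_const (p := q) (Or.inl hwr.ne')).comp t hWc; exact this
  have hZeq : Z = fun u => -(ε * Real.exp u ^ (1 + σ) * w (Real.exp u) ^ q *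
      (|w1 (Real.exp u)| ^ (-p) * w1 (Real.exp u))) := by
    funext u; simp [Z, mul_assoc, hw1def]
  have hZd : HasDerivAt Z
      (-(ε * ((1 + σ) * r ^ (1 + σ - 1) * r) * w r ^ q * (A ^ (-p) * w1 r)
        + ε * r ^ (1 + σ) * (q * w r ^ (q - 1) * (w1 r * r)) * (A ^ (-p) * w1 r)
        + ε * r ^ (1 + σ) * w r ^ q * ((-p + 1) * A ^ (-p) * w2 * r))) t := by
    rw [hZeq]
    have h1 := ((hasDerivAt_const t ε).mul hE1σ).mul hWq
    have h2 := (h1.mul hGc).neg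
    refine h2.congr_deriv ?_
    simp only [Pi.mul_apply, ← hrdef, ← hAdef]
    ring
  have hrσ1 : r ^ (1 + σ - 1) * r = r ^ (1 + σ) := by
    rw [← Real.rpow_add_one hr.ne']; ring_nf
  have hwq1 : w r ^ (q - 1) * w r = w r ^ q := by
    rw [← Real.rpow_add_one hwr.ne']; ring_nf
  refine ⟨?_, ?_, ?_⟩
  · -- S equation
    rw [hSd.deriv]
    show _ = -(r * w1 r / w r) * ((p - NN) / (p - 1) + -(r * w1 r / w r)
      + -(ε * r ^ (1 + σ) * w r ^ q * A ^ (-p) * w1 r) / (p - 1))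
    rw [hw2f, hr1σ]
    field_simp
    ring
  · -- Z equation
    rw [hZd.deriv]
    show _ = -(ε * r ^ (1 + σ) * w r ^ q * A ^ (-p) * w1 r) *
      (NN + σ - q * -(r * w1 r / w r) - -(ε * r ^ (1 + σ) * w r ^ q * A ^ (-p) * w1 r))
    rw [hw2f, hr1σ]
    have hwq1' : w r ^ (-1 + q) * w r = w r ^ q := by
      rw [← Real.rpow_add_one hwr.ne']; ring_nf
    have hqe : w r ^ (q - 1) = w r ^ (-1 + q) := by congr 1; ring
    have hσ' : r ^ (1 + σ - 1) = r ^ σ := by congr 1; ring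
    have hq' : w r ^ (q - 1) = w r ^ q / w r := by rw [eq_div_iff hwr.ne']; exact hwq1
    rw [hσ', hq']
    rcases hε with h | h <;> subst h
    · field_simp
      ring
    · field_simp
      ring
  · -- recovery of w
    have hk : (0:ℝ) < q + 1 - p := by linarith
    have hεabs : |ε| = 1 := by rcases hε with h | h <;> rw [h] <;> norm_num
    have hs0abs : |S t| = r * A / w r := by
      show |(-(r * w1 r / w r))| = r * A / w r
      rw [abs_neg, abs_div, abs_mul, abs_of_pos hr, abs_of_pos hwr, ← hAdef]
    have hz0abs : |Z t| = r ^ (1 + σ) * w r ^ q * A ^ (-p) * A := by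
      show |(-(ε * r ^ (1 + σ) * w r ^ q * A ^ (-p) * w1 r))| = _
      rw [abs_neg, abs_mul, abs_mul, abs_mul, abs_mul, hεabs,
        abs_of_pos (Real.rpow_pos_of_pos hr _), abs_of_pos (Real.rpow_pos_of_pos hwr _),
        abs_of_pos (Real.rpow_pos_of_pos hA _), ← hAdef, one_mul]
    have hX : |S t| ^ (p - 1) * |Z t| = r ^ (p + σ) * w r ^ (q + 1 - p) := by
      rw [hs0abs, hz0abs, Real.div_rpow (by positivity) hwr.le,
        Real.mul_rpow hr.le hA.le]
      have h1 : r ^ (p - 1) * r ^ (1 + σ) = r ^ (p + σ) := by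
        rw [← Real.rpow_add hr]; ring_nf
      have h2 : A ^ (p - 1) * (A ^ (-p) * A) = 1 := by
        rw [← Real.rpow_add_one hA.ne', ← Real.rpow_add hA]
        norm_num
      have h3 : w r ^ (q + 1 - p) * w r ^ (p - 1) = w r ^ q := by
        rw [← Real.rpow_add hwr]; ring_nf
      have hwp : w r ^ (p - 1) ≠ 0 := (Real.rpow_pos_of_pos hwr _).ne'
      rw [← h1, show w r ^ (q + 1 - p) = w r ^ q / w r ^ (p - 1) from by
        rw [eq_div_iff hwp]; exact h3]
      field_simp
      linear_combination h2
    rw [hX, Real.mul_rpow (by positivity) (by positivity),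
      ← Real.rpow_mul hr.le, ← Real.rpow_mul hwr.le,
      mul_one_div, mul_one_div, div_self hk.ne', Real.rpow_one,
      ← mul_assoc, ← Real.rpow_add hr]
    rw [show -((p + σ) / (q + 1 - p)) + (p + σ) / (q + 1 - p) = 0 by ring,
      Real.rpow_zero, one_mul]
end

section
/- Let N ≥ 3 and q* = (2N+p)/(2(N-1)p - 1) with p > N/(N-1), so that (N-1)p q* = N + (p+q*)/2. Given c > 0, set b = (c((N-1)p - N))^{1/p} and d = (c^{pq*-1}/((N-1)p - N))^{1/p} · 1/(N - (N-1)q*). Then the pair u₁'(r) = c r^{1-N}(d + r^{(p-q*)/2})^{2(N-(N-1)p)/(p-q*)}, u₂'(r) = -b r^{1-(N-1)q*}(d + r^{(p-q*)/2})^{2((N-1)q*-N)/(p-q*)} satisfies the radial system -(u₁'' + ((N-1)/r)u₁') = |u₂'|^p, -(u₂'' + ((N-1)/r)u₂') = |u₁'|^q* on (0,∞), provided q₁ < q* (so that N - (N-1)q* relevant signs hold) and p ≠ q*. -/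
private lemma auxDeriv (k d a α β r : ℝ) (hr : 0 < r) (hd : 0 < d) :
    deriv (fun s : ℝ => k * s ^ a * (d + s ^ α) ^ β) r
      = k * (a * r ^ (a - 1) * (d + r ^ α) ^ β
          + r ^ a * (α * r ^ (α - 1) * β * (d + r ^ α) ^ (β - 1))) := by
  have hg : (0:ℝ) < d + r ^ α := add_pos hd (Real.rpow_pos_of_pos hr α)
  have h1 : HasDerivAt (fun s : ℝ => s ^ a) (a * r ^ (a - 1)) r :=
    Real.hasDerivAt_rpow_const (Or.inl hr.ne')
  have h2 : HasDerivAt (fun s : ℝ => d + s ^ α) (α * r ^ (α - 1)) r :=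
    (Real.hasDerivAt_rpow_const (Or.inl hr.ne')).const_add d
  have h3 : HasDerivAt (fun s : ℝ => (d + s ^ α) ^ β)
      (α * r ^ (α - 1) * β * (d + r ^ α) ^ (β - 1)) r := h2.rpow_const (Or.inl hg.ne')
  have h4 : HasDerivAt (fun s : ℝ => k * (s ^ a * (d + s ^ α) ^ β))
      (k * (a * r ^ (a - 1) * (d + r ^ α) ^ β
        + r ^ a * (α * r ^ (α - 1) * β * (d + r ^ α) ^ (β - 1)))) r := (h1.mul h3).const_mul k
  have h5 : (fun s : ℝ => k * s ^ a * (d + s ^ α) ^ β)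
      = fun s : ℝ => k * (s ^ a * (d + s ^ α) ^ β) := by funext s; ring
  rw [h5, h4.deriv]

/-- Explicit solutions of the radial Hamilton–Jacobi system at the critical Sobolev
exponent `q* = (2N+p)/(2(N-1)p - 1)`. -/
theorem stmt19 (N p c : ℝ) (hN : 3 ≤ N) (hp : N / (N - 1) < p) (hc : 0 < c)
    (hq1 : N / ((N - 1) * p - 1) < (2 * N + p) / (2 * (N - 1) * p - 1))
    (hpq : p ≠ (2 * N + p) / (2 * (N - 1) * p - 1)) :
    let qs := (2 * N + p) / (2 * (N - 1) * p - 1)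
    let b := (c * ((N - 1) * p - N)) ^ (1 / p)
    let d := (c ^ (p * qs - 1) / ((N - 1) * p - N)) ^ (1 / p) * (1 / (N - (N - 1) * qs))
    let v1 : ℝ → ℝ := fun r =>
      c * r ^ (1 - N) * (d + r ^ ((p - qs) / 2)) ^ (2 * (N - (N - 1) * p) / (p - qs))
    let v2 : ℝ → ℝ := fun r =>
      -(b * r ^ (1 - (N - 1) * qs) * (d + r ^ ((p - qs) / 2)) ^ (2 * ((N - 1) * qs - N) / (p - qs)))
    ∀ r > (0:ℝ),
      -(deriv v1 r + ((N - 1) / r) * v1 r) = |v2 r| ^ p ∧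
      -(deriv v2 r + ((N - 1) / r) * v2 r) = |v1 r| ^ qs := by
  intro qs b d v1 v2 r hr
  have hqs : qs = (2 * N + p) / (2 * (N - 1) * p - 1) := rfl
  have hb : b = (c * ((N - 1) * p - N)) ^ (1 / p) := rfl
  have hd : d = (c ^ (p * qs - 1) / ((N - 1) * p - N)) ^ (1 / p) * (1 / (N - (N - 1) * qs)) := rfl
  have hv1 : v1 = fun r =>
      c * r ^ (1 - N) * (d + r ^ ((p - qs) / 2)) ^ (2 * (N - (N - 1) * p) / (p - qs)) := rfl
  have hv2 : v2 = fun r =>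
      -(b * r ^ (1 - (N - 1) * qs)
        * (d + r ^ ((p - qs) / 2)) ^ (2 * ((N - 1) * qs - N) / (p - qs))) := rfl
  have hN1 : (0:ℝ) < N - 1 := by linarith
  have hp0 : (0:ℝ) < p := lt_trans (div_pos (by linarith) hN1) hp
  have hM : (0:ℝ) < (N - 1) * p - N := by
    have h := (div_lt_iff₀ hN1).mp hp
    nlinarith
  have hden : (0:ℝ) < 2 * (N - 1) * p - 1 := by nlinarith
  have hqs0 : (0:ℝ) < qs := by rw [hqs]; exact div_pos (by linarith) hden
  have key : (N - 1) * p * qs = N + (p + qs) / 2 := by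
    have hq : qs * (2 * (N - 1) * p - 1) = 2 * N + p := by rw [hqs]; exact div_mul_cancel₀ _ hden.ne'
    linear_combination hq / 2
  have hNq : (0:ℝ) < N - (N - 1) * qs := by
    rw [hqs, sub_pos, ← mul_div_assoc, div_lt_iff₀ hden]
    nlinarith [mul_pos (show (0:ℝ) < 2 * N - 1 by linarith) hM]
  have hpqs : p - qs ≠ 0 := sub_ne_zero.mpr (by rw [hqs]; exact hpq)
  have hd0 : (0:ℝ) < d := by
    rw [hd]
    exact mul_pos (Real.rpow_pos_of_pos (div_pos (Real.rpow_pos_of_pos hc _) hM) _)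
      (one_div_pos.mpr hNq)
  have hG : (0:ℝ) < d + r ^ ((p - qs) / 2) := add_pos hd0 (Real.rpow_pos_of_pos hr _)
  have hb0 : (0:ℝ) < b := by rw [hb]; exact Real.rpow_pos_of_pos (mul_pos hc hM) _
  have hsub : ∀ x : ℝ, r ^ (x - 1) = r ^ x / r := fun x => by
    rw [Real.rpow_sub hr, Real.rpow_one]
  have hGb : (d + r ^ ((p - qs) / 2)) ^ (2 * (N - (N - 1) * p) / (p - qs))
      = (d + r ^ ((p - qs) / 2)) ^ (2 * (N - (N - 1) * p) / (p - qs) - 1)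
        * (d + r ^ ((p - qs) / 2)) := by
    rw [← Real.rpow_add_one hG.ne']; congr 1; ring
  have hGd : (d + r ^ ((p - qs) / 2)) ^ (2 * ((N - 1) * qs - N) / (p - qs))
      = (d + r ^ ((p - qs) / 2)) ^ (2 * ((N - 1) * qs - N) / (p - qs) - 1)
        * (d + r ^ ((p - qs) / 2)) := by
    rw [← Real.rpow_add_one hG.ne']; congr 1; ring
  have hαβ : (p - qs) / 2 * (2 * (N - (N - 1) * p) / (p - qs)) = N - (N - 1) * p := by
    field_simp
  have hαδ : (p - qs) / 2 * (2 * ((N - 1) * qs - N) / (p - qs)) = (N - 1) * qs - N := by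
    field_simp
  have eγ : (1 - (N - 1) * qs) * p = (p - qs) / 2 + (1 - N) - 1 := by linear_combination -key
  have eδ : 2 * ((N - 1) * qs - N) / (p - qs) * p = 2 * (N - (N - 1) * p) / (p - qs) - 1 := by
    have hnum : 2 * ((N - 1) * qs - N) * p = 2 * (N - (N - 1) * p) - (p - qs) := by
      linear_combination 2 * key
    calc 2 * ((N - 1) * qs - N) / (p - qs) * p = 2 * ((N - 1) * qs - N) * p / (p - qs) := by ring
      _ = (2 * (N - (N - 1) * p) - (p - qs)) / (p - qs) := by rw [hnum]
      _ = 2 * (N - (N - 1) * p) / (p - qs) - 1 := by rw [sub_div, div_self hpqs]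
  have eγ2 : (1 - N) * qs = 1 - (N - 1) * qs - 1 := by ring
  have eδ2 : 2 * (N - (N - 1) * p) / (p - qs) * qs = 2 * ((N - 1) * qs - N) / (p - qs) - 1 := by
    have hnum : 2 * (N - (N - 1) * p) * qs = 2 * ((N - 1) * qs - N) - (p - qs) := by
      linear_combination (-2) * key
    calc 2 * (N - (N - 1) * p) / (p - qs) * qs = 2 * (N - (N - 1) * p) * qs / (p - qs) := by ring
      _ = (2 * ((N - 1) * qs - N) - (p - qs)) / (p - qs) := by rw [hnum]
      _ = 2 * ((N - 1) * qs - N) / (p - qs) - 1 := by rw [sub_div, div_self hpqs]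
  have hw2 : (0:ℝ) < b * r ^ (1 - (N - 1) * qs)
      * (d + r ^ ((p - qs) / 2)) ^ (2 * ((N - 1) * qs - N) / (p - qs)) :=
    mul_pos (mul_pos hb0 (Real.rpow_pos_of_pos hr _)) (Real.rpow_pos_of_pos hG _)
  have hw1 : (0:ℝ) < c * r ^ (1 - N)
      * (d + r ^ ((p - qs) / 2)) ^ (2 * (N - (N - 1) * p) / (p - qs)) :=
    mul_pos (mul_pos hc (Real.rpow_pos_of_pos hr _)) (Real.rpow_pos_of_pos hG _)
  have h1 : (c * ((N - 1) * p - N)) ^ (1 / p)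
      * (c ^ (p * qs - 1) / ((N - 1) * p - N)) ^ (1 / p) = c ^ qs := by
    rw [← Real.mul_rpow (mul_pos hc hM).le
      (div_pos (Real.rpow_pos_of_pos hc _) hM).le]
    rw [show c * ((N - 1) * p - N) * (c ^ (p * qs - 1) / ((N - 1) * p - N))
        = ((N - 1) * p - N) * c ^ (p * qs - 1) / ((N - 1) * p - N) * c by ring,
      mul_div_cancel_left₀ _ hM.ne']
    rw [← Real.rpow_add_one hc.ne']
    rw [← Real.rpow_mul hc.le]
    congr 1
    rw [show (p * qs - 1 + 1) * (1 / p) = qs * (p * (1 / p)) by ring,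
      mul_one_div_cancel hp0.ne', mul_one]
  have hcoef : b * d * (N - (N - 1) * qs) = c ^ qs := by
    calc b * d * (N - (N - 1) * qs)
        = (c * ((N - 1) * p - N)) ^ (1 / p)
          * (c ^ (p * qs - 1) / ((N - 1) * p - N)) ^ (1 / p)
          * ((N - (N - 1) * qs) * (1 / (N - (N - 1) * qs))) := by rw [hb, hd]; ring
      _ = c ^ qs := by rw [mul_one_div_cancel hNq.ne', mul_one, h1]
  have hL1 : -(deriv v1 r + ((N - 1) / r) * v1 r)
      = c * ((N - 1) * p - N) * (r ^ ((p - qs) / 2) * r ^ (1 - N) / r)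
        * (d + r ^ ((p - qs) / 2)) ^ (2 * (N - (N - 1) * p) / (p - qs) - 1) := by
    simp only [hv1]
    rw [auxDeriv c d (1 - N) ((p - qs) / 2) (2 * (N - (N - 1) * p) / (p - qs)) r hr hd0]
    rw [hGb, hsub (1 - N), hsub ((p - qs) / 2)]
    linear_combination (-(c * r ^ (1 - N)
      * (d + r ^ ((p - qs) / 2)) ^ (2 * (N - (N - 1) * p) / (p - qs) - 1)
      * r ^ ((p - qs) / 2) / r)) * hαβ
  have hR1 : |v2 r| ^ p
      = c * ((N - 1) * p - N) * (r ^ ((p - qs) / 2) * r ^ (1 - N) / r)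
        * (d + r ^ ((p - qs) / 2)) ^ (2 * (N - (N - 1) * p) / (p - qs) - 1) := by
    simp only [hv2]
    rw [abs_neg, abs_of_pos hw2]
    rw [Real.mul_rpow (mul_pos hb0 (Real.rpow_pos_of_pos hr _)).le
      (Real.rpow_pos_of_pos hG _).le]
    rw [Real.mul_rpow hb0.le (Real.rpow_pos_of_pos hr _).le]
    rw [hb, ← Real.rpow_mul (mul_pos hc hM).le, one_div_mul_cancel hp0.ne', Real.rpow_one]
    rw [← Real.rpow_mul hr.le, ← Real.rpow_mul hG.le]
    rw [eγ, eδ]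
    rw [← Real.rpow_add hr, ← hsub ((p - qs) / 2 + (1 - N))]
  have hL2 : -(deriv v2 r + ((N - 1) / r) * v2 r)
      = b * (N - (N - 1) * qs) * d * (r ^ (1 - (N - 1) * qs) / r)
        * (d + r ^ ((p - qs) / 2)) ^ (2 * ((N - 1) * qs - N) / (p - qs) - 1) := by
    simp only [hv2]
    rw [deriv.fun_neg]
    rw [auxDeriv b d (1 - (N - 1) * qs) ((p - qs) / 2) (2 * ((N - 1) * qs - N) / (p - qs)) r hr hd0]
    rw [hGd, hsub (1 - (N - 1) * qs), hsub ((p - qs) / 2)]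
    linear_combination (b * r ^ (1 - (N - 1) * qs)
      * (d + r ^ ((p - qs) / 2)) ^ (2 * ((N - 1) * qs - N) / (p - qs) - 1)
      * r ^ ((p - qs) / 2) / r) * hαδ
  have hR2 : |v1 r| ^ qs
      = b * (N - (N - 1) * qs) * d * (r ^ (1 - (N - 1) * qs) / r)
        * (d + r ^ ((p - qs) / 2)) ^ (2 * ((N - 1) * qs - N) / (p - qs) - 1) := by
    simp only [hv1]
    rw [abs_of_pos hw1]
    rw [Real.mul_rpow (mul_pos hc (Real.rpow_pos_of_pos hr _)).le
      (Real.rpow_pos_of_pos hG _).le]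
    rw [Real.mul_rpow hc.le (Real.rpow_pos_of_pos hr _).le]
    rw [← Real.rpow_mul hr.le, ← Real.rpow_mul hG.le]
    rw [← hcoef, eγ2, eδ2, hsub (1 - (N - 1) * qs)]
    ring
  exact ⟨by rw [hL1, hR1], by rw [hL2, hR2]⟩
end
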